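/- arXiv:1805.05199 — 13 statements merged into one kernel-verified Lean document; each statement's English description precedes it below -/
import Mathlib

section
/- Let 0 < p < 1 and α, β₁, β₂, β₃ > 0. Let V₁, V₂, V₃ be independent ℕ-valued random variables on a probability space such that P(Vᵢ ≤ x) = (1 − p^{(x+1)^α})^{βᵢ} for all x ∈ ℕ and i = 1,2,3, and set X₁ = max{V₁, V₃} and X₂ = max{V₂, V₃}. Then for all x₁, x₂ ∈ ℕ, the joint cumulative distribution function satisfies P(X₁ ≤ x₁, X₂ ≤ x₂) = (1 − p^{(x₁+1)^α})^{β₁} · (1 − p^{(x₂+1)^α})^{β₂} · (1 − p^{(z+1)^α})^{β₃}, where z = min{x₁, x₂}. -/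
open MeasureTheory ProbabilityTheory

/-- The CDF of the exponentiated discrete Weibull distribution `EDW(α, p, β)`:
`F_EDW(x; α, p, β) = (1 - p^((x+1)^α))^β`. -/
noncomputable def edwCDF (α p β : ℝ) (x : ℕ) : ℝ :=
  (1 - p ^ (((x : ℝ) + 1) ^ α)) ^ β

/-- The PMF of the exponentiated discrete Weibull distribution `EDW(α, p, β)`:
`f_EDW(x; α, p, β) = (1 - p^((x+1)^α))^β - (1 - p^(x^α))^β`. -/
noncomputable def edwPMF (α p β : ℝ) (x : ℕ) : ℝ :=
  (1 - p ^ (((x : ℝ) + 1) ^ α)) ^ β - (1 - p ^ ((x : ℝ) ^ α)) ^ β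

/-- Lemma 1: the joint CDF of the BDEW distribution. -/
theorem bdew_joint_cdf
    {Ω : Type*} [MeasurableSpace Ω] (μ : Measure Ω) [IsProbabilityMeasure μ]
    (α p β₁ β₂ β₃ : ℝ)
    (hp0 : 0 < p) (hp1 : p < 1) (hα : 0 < α)
    (hβ₁ : 0 < β₁) (hβ₂ : 0 < β₂) (hβ₃ : 0 < β₃)
    (V₁ V₂ V₃ : Ω → ℕ)
    (hm₁ : Measurable V₁) (hm₂ : Measurable V₂) (hm₃ : Measurable V₃)
    (hindep : iIndepFun ![V₁, V₂, V₃] μ)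
    (hcdf₁ : ∀ x : ℕ, (μ {ω | V₁ ω ≤ x}).toReal = edwCDF α p β₁ x)
    (hcdf₂ : ∀ x : ℕ, (μ {ω | V₂ ω ≤ x}).toReal = edwCDF α p β₂ x)
    (hcdf₃ : ∀ x : ℕ, (μ {ω | V₃ ω ≤ x}).toReal = edwCDF α p β₃ x) :
    ∀ x₁ x₂ : ℕ,
      (μ {ω | max (V₁ ω) (V₃ ω) ≤ x₁ ∧ max (V₂ ω) (V₃ ω) ≤ x₂}).toReal =
        edwCDF α p β₁ x₁ * edwCDF α p β₂ x₂ * edwCDF α p β₃ (min x₁ x₂) := by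
  intro x₁ x₂
  set sets : Fin 3 → Set ℕ := ![{n | n ≤ x₁}, {n | n ≤ x₂}, {n | n ≤ min x₁ x₂}] with hsets
  have hmeas : ∀ i, i ∈ (Finset.univ : Finset (Fin 3)) → MeasurableSet (sets i) :=
    fun i _ => trivial
  have hkey := hindep.measure_inter_preimage_eq_mul Finset.univ hmeas
  have hset : {ω | max (V₁ ω) (V₃ ω) ≤ x₁ ∧ max (V₂ ω) (V₃ ω) ≤ x₂} =
      ⋂ i ∈ (Finset.univ : Finset (Fin 3)), (![V₁, V₂, V₃] i) ⁻¹' sets i := by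
    ext ω
    simp [hsets, Fin.forall_fin_succ, max_le_iff, le_min_iff]
    tauto
  rw [hset, hkey]
  have h1 : μ ((![V₁, V₂, V₃] 0) ⁻¹' sets 0) = μ {ω | V₁ ω ≤ x₁} := rfl
  have h2 : μ ((![V₁, V₂, V₃] 1) ⁻¹' sets 1) = μ {ω | V₂ ω ≤ x₂} := rfl
  have h3 : μ ((![V₁, V₂, V₃] 2) ⁻¹' sets 2) = μ {ω | V₃ ω ≤ min x₁ x₂} := rfl
  rw [Fin.prod_univ_three, h1, h2, h3, ENNReal.toReal_mul, ENNReal.toReal_mul,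
    hcdf₁, hcdf₂, hcdf₃]
end

section
/- Let 0 < p < 1 and α, β₁, β₂, β₃ > 0. Let V₁, V₂, V₃ be independent ℕ-valued random variables with P(Vᵢ ≤ x) = (1 − p^{(x+1)^α})^{βᵢ} for all x ∈ ℕ, and set X₁ = max{V₁, V₃}, X₂ = max{V₂, V₃}. Then for all x₁, x₂ ∈ ℕ with x₁ < x₂, the joint probability mass function satisfies P(X₁ = x₁, X₂ = x₂) = [(1 − p^{(x₁+1)^α})^{β₁+β₃} − (1 − p^{x₁^α})^{β₁+β₃}] · [(1 − p^{(x₂+1)^α})^{β₂} − (1 − p^{x₂^α})^{β₂}]. -/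
open MeasureTheory ProbabilityTheory

/-- The joint PMF of the BDEW distribution in the case `x₁ < x₂`. -/
theorem bdew_joint_pmf_lt
    {Ω : Type*} [MeasurableSpace Ω] (μ : Measure Ω) [IsProbabilityMeasure μ]
    (α p β₁ β₂ β₃ : ℝ)
    (hp0 : 0 < p) (hp1 : p < 1) (hα : 0 < α)
    (hβ₁ : 0 < β₁) (hβ₂ : 0 < β₂) (hβ₃ : 0 < β₃)
    (V₁ V₂ V₃ : Ω → ℕ)
    (hm₁ : Measurable V₁) (hm₂ : Measurable V₂) (hm₃ : Measurable V₃)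
    (hindep : iIndepFun ![V₁, V₂, V₃] μ)
    (hcdf₁ : ∀ x : ℕ, (μ {ω | V₁ ω ≤ x}).toReal = edwCDF α p β₁ x)
    (hcdf₂ : ∀ x : ℕ, (μ {ω | V₂ ω ≤ x}).toReal = edwCDF α p β₂ x)
    (hcdf₃ : ∀ x : ℕ, (μ {ω | V₃ ω ≤ x}).toReal = edwCDF α p β₃ x) :
    ∀ x₁ x₂ : ℕ, x₁ < x₂ →
      (μ {ω | max (V₁ ω) (V₃ ω) = x₁ ∧ max (V₂ ω) (V₃ ω) = x₂}).toReal =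
        edwPMF α p (β₁ + β₃) x₁ * edwPMF α p β₂ x₂ := by
  intro x₁ x₂ hx
  -- lower "cdf" values
  have hlow : ∀ (V : Ω → ℕ) (β : ℝ), 0 < β →
      (∀ x : ℕ, (μ {ω | V ω ≤ x}).toReal = edwCDF α p β x) →
      ∀ x : ℕ, (μ {ω | V ω < x}).toReal = (1 - p ^ ((x : ℝ) ^ α)) ^ β := by
    intro V β hβ hcdf x
    cases x with
    | zero =>
      have h0 : {ω | V ω < 0} = (∅ : Set Ω) := by ext ω; simp
      rw [h0]
      simp [Real.zero_rpow hα.ne', Real.zero_rpow hβ.ne']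
    | succ n =>
      have h0 : {ω | V ω < n + 1} = {ω | V ω ≤ n} := by ext ω; simp [Nat.lt_succ_iff]
      rw [h0, hcdf, edwCDF]
      push_cast
      ring_nf
  -- independence: product formula for three preimages
  have hprod : ∀ (s₁ s₂ s₃ : Set ℕ),
      μ (V₁ ⁻¹' s₁ ∩ (V₂ ⁻¹' s₂ ∩ V₃ ⁻¹' s₃)) =
        μ (V₁ ⁻¹' s₁) * μ (V₂ ⁻¹' s₂) * μ (V₃ ⁻¹' s₃) := by
    intro s₁ s₂ s₃
    have h := (iIndepFun_iff_measure_inter_preimage_eq_mul.mp hindep) Finset.univ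
      (sets := ![s₁, s₂, s₃]) (fun i _ => MeasurableSet.of_discrete)
    have hset : (⋂ i ∈ (Finset.univ : Finset (Fin 3)), (![V₁, V₂, V₃] i) ⁻¹' (![s₁, s₂, s₃] i)) =
        V₁ ⁻¹' s₁ ∩ (V₂ ⁻¹' s₂ ∩ V₃ ⁻¹' s₃) := by
      ext ω
      simp [Fin.forall_fin_succ, Set.mem_iInter]
    rw [hset] at h
    rw [h, Fin.prod_univ_three]
    simp [mul_assoc]
  -- the event as a set difference
  have hUT : (V₁ ⁻¹' {n | n < x₁} ∩ (V₂ ⁻¹' {x₂} ∩ V₃ ⁻¹' {n | n < x₁})) ⊆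
      (V₁ ⁻¹' {n | n ≤ x₁} ∩ (V₂ ⁻¹' {x₂} ∩ V₃ ⁻¹' {n | n ≤ x₁})) := by
    intro ω hω
    simp only [Set.mem_inter_iff, Set.mem_preimage, Set.mem_setOf_eq,
      Set.mem_singleton_iff] at *
    omega
  have hevent : {ω | max (V₁ ω) (V₃ ω) = x₁ ∧ max (V₂ ω) (V₃ ω) = x₂} =
      (V₁ ⁻¹' {n | n ≤ x₁} ∩ (V₂ ⁻¹' {x₂} ∩ V₃ ⁻¹' {n | n ≤ x₁})) \
      (V₁ ⁻¹' {n | n < x₁} ∩ (V₂ ⁻¹' {x₂} ∩ V₃ ⁻¹' {n | n < x₁})) := by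
    ext ω
    simp only [Set.mem_diff, Set.mem_inter_iff, Set.mem_preimage, Set.mem_setOf_eq,
      Set.mem_singleton_iff, not_and, not_lt]
    omega
  have hUm : MeasurableSet (V₁ ⁻¹' {n | n < x₁} ∩ (V₂ ⁻¹' {x₂} ∩ V₃ ⁻¹' {n | n < x₁})) :=
    (hm₁ MeasurableSet.of_discrete).inter
      ((hm₂ MeasurableSet.of_discrete).inter (hm₃ MeasurableSet.of_discrete))
  have htoReal : (μ ((V₁ ⁻¹' {n | n ≤ x₁} ∩ (V₂ ⁻¹' {x₂} ∩ V₃ ⁻¹' {n | n ≤ x₁})) \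
      (V₁ ⁻¹' {n | n < x₁} ∩ (V₂ ⁻¹' {x₂} ∩ V₃ ⁻¹' {n | n < x₁})))).toReal =
      (μ (V₁ ⁻¹' {n | n ≤ x₁} ∩ (V₂ ⁻¹' {x₂} ∩ V₃ ⁻¹' {n | n ≤ x₁}))).toReal -
      (μ (V₁ ⁻¹' {n | n < x₁} ∩ (V₂ ⁻¹' {x₂} ∩ V₃ ⁻¹' {n | n < x₁}))).toReal := by
    rw [measure_diff hUT hUm.nullMeasurableSet (measure_ne_top μ _)]
    exact ENNReal.toReal_sub_of_le (measure_mono hUT) (measure_ne_top μ _)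
  -- value of μ (V₂ ⁻¹' {x₂})
  have hB : (μ (V₂ ⁻¹' {x₂})).toReal = edwPMF α p β₂ x₂ := by
    have hsplit : V₂ ⁻¹' {x₂} = {ω | V₂ ω ≤ x₂} \ {ω | V₂ ω < x₂} := by
      ext ω; simp only [Set.mem_preimage, Set.mem_singleton_iff, Set.mem_diff,
        Set.mem_setOf_eq, not_lt]; omega
    have hsub : {ω | V₂ ω < x₂} ⊆ {ω | V₂ ω ≤ x₂} := by
      intro ω h; simp only [Set.mem_setOf_eq] at *; omega
    have hm : MeasurableSet {ω | V₂ ω < x₂} :=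
      hm₂ (MeasurableSet.of_discrete : MeasurableSet {n | n < x₂})
    rw [hsplit, measure_diff hsub hm.nullMeasurableSet (measure_ne_top μ _),
      ENNReal.toReal_sub_of_le (measure_mono hsub) (measure_ne_top μ _),
      hcdf₂, hlow V₂ β₂ hβ₂ hcdf₂]
    rfl
  -- put everything together
  rw [hevent, htoReal, hprod, hprod, ENNReal.toReal_mul, ENNReal.toReal_mul,
    ENNReal.toReal_mul, ENNReal.toReal_mul, hB]
  have e1 : (μ (V₁ ⁻¹' {n | n ≤ x₁})).toReal = edwCDF α p β₁ x₁ := hcdf₁ x₁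
  have e3 : (μ (V₃ ⁻¹' {n | n ≤ x₁})).toReal = edwCDF α p β₃ x₁ := hcdf₃ x₁
  have f1 : (μ (V₁ ⁻¹' {n | n < x₁})).toReal = (1 - p ^ ((x₁ : ℝ) ^ α)) ^ β₁ :=
    hlow V₁ β₁ hβ₁ hcdf₁ x₁
  have f3 : (μ (V₃ ⁻¹' {n | n < x₁})).toReal = (1 - p ^ ((x₁ : ℝ) ^ α)) ^ β₃ :=
    hlow V₃ β₃ hβ₃ hcdf₃ x₁
  rw [e1, e3, f1, f3]
  -- final real arithmetic
  have hbase1 : (0 : ℝ) ≤ 1 - p ^ (((x₁ : ℝ) + 1) ^ α) := by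
    have : p ^ (((x₁ : ℝ) + 1) ^ α) ≤ 1 :=
      Real.rpow_le_one hp0.le hp1.le (Real.rpow_nonneg (by positivity) α)
    linarith
  have hbase0 : (0 : ℝ) ≤ 1 - p ^ ((x₁ : ℝ) ^ α) := by
    have : p ^ ((x₁ : ℝ) ^ α) ≤ 1 :=
      Real.rpow_le_one hp0.le hp1.le (Real.rpow_nonneg (Nat.cast_nonneg x₁) α)
    linarith
  have hne : β₁ + β₃ ≠ 0 := by positivity
  simp only [edwCDF, edwPMF, Real.rpow_add' hbase1 hne, Real.rpow_add' hbase0 hne]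
  ring
end

section
/- Let 0 < p < 1 and α, β₁, β₂, β₃ > 0. Let V₁, V₂, V₃ be independent ℕ-valued random variables with P(Vᵢ ≤ x) = (1 − p^{(x+1)^α})^{βᵢ} for all x ∈ ℕ, and set X₁ = max{V₁, V₃}, X₂ = max{V₂, V₃}. Then for all x₁, x₂ ∈ ℕ with x₂ < x₁, the joint probability mass function satisfies P(X₁ = x₁, X₂ = x₂) = [(1 − p^{(x₁+1)^α})^{β₁} − (1 − p^{x₁^α})^{β₁}] · [(1 − p^{(x₂+1)^α})^{β₂+β₃} − (1 − p^{x₂^α})^{β₂+β₃}]. -/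
open MeasureTheory ProbabilityTheory

/-- The joint PMF of the BDEW distribution in the case `x₂ < x₁`. -/
theorem bdew_joint_pmf_gt
    {Ω : Type*} [MeasurableSpace Ω] (μ : Measure Ω) [IsProbabilityMeasure μ]
    (α p β₁ β₂ β₃ : ℝ)
    (hp0 : 0 < p) (hp1 : p < 1) (hα : 0 < α)
    (hβ₁ : 0 < β₁) (hβ₂ : 0 < β₂) (hβ₃ : 0 < β₃)
    (V₁ V₂ V₃ : Ω → ℕ)
    (hm₁ : Measurable V₁) (hm₂ : Measurable V₂) (hm₃ : Measurable V₃)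
    (hindep : iIndepFun ![V₁, V₂, V₃] μ)
    (hcdf₁ : ∀ x : ℕ, (μ {ω | V₁ ω ≤ x}).toReal = edwCDF α p β₁ x)
    (hcdf₂ : ∀ x : ℕ, (μ {ω | V₂ ω ≤ x}).toReal = edwCDF α p β₂ x)
    (hcdf₃ : ∀ x : ℕ, (μ {ω | V₃ ω ≤ x}).toReal = edwCDF α p β₃ x) :
    ∀ x₁ x₂ : ℕ, x₂ < x₁ →
      (μ {ω | max (V₁ ω) (V₃ ω) = x₁ ∧ max (V₂ ω) (V₃ ω) = x₂}).toReal =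
        edwPMF α p β₁ x₁ * edwPMF α p (β₂ + β₃) x₂ := by
  intro x₁ x₂ hlt
  -- CDF product identity from independence
  have key : ∀ a b c : ℕ,
      (μ ({ω | V₁ ω ≤ a} ∩ ({ω | V₂ ω ≤ b} ∩ {ω | V₃ ω ≤ c}))).toReal
        = edwCDF α p β₁ a * (edwCDF α p β₂ b * edwCDF α p β₃ c) := by
    intro a b c
    have h := hindep.measure_inter_preimage_eq_mul (S := Finset.univ)
      (sets := ![Set.Iic a, Set.Iic b, Set.Iic c])
      (fun i _ => by fin_cases i <;> exact measurableSet_Iic)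
    have hset : (⋂ i ∈ (Finset.univ : Finset (Fin 3)),
        (![V₁, V₂, V₃] i) ⁻¹' (![Set.Iic a, Set.Iic b, Set.Iic c] i))
        = {ω | V₁ ω ≤ a} ∩ ({ω | V₂ ω ≤ b} ∩ {ω | V₃ ω ≤ c}) := by
      ext ω
      simp [Fin.forall_fin_succ, Set.mem_iInter, Set.mem_Iic]
    rw [hset, Fin.prod_univ_three] at h
    simp only [Matrix.cons_val_zero, Matrix.cons_val_one, Matrix.head_cons,
      Matrix.cons_val_two, Matrix.tail_cons] at h
    rw [h, ENNReal.toReal_mul, ENNReal.toReal_mul]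
    have e1 : V₁ ⁻¹' Set.Iic a = {ω | V₁ ω ≤ a} := rfl
    have e2 : V₂ ⁻¹' Set.Iic b = {ω | V₂ ω ≤ b} := rfl
    have e3 : V₃ ⁻¹' Set.Iic c = {ω | V₃ ω ≤ c} := rfl
    rw [e1, e2, e3, hcdf₁, hcdf₂, hcdf₃, mul_assoc]
  obtain ⟨j, rfl⟩ : ∃ j, x₁ = j + 1 := ⟨x₁ - 1, by omega⟩
  -- measurability of the basic sets
  have mS : ∀ a m : ℕ,
      MeasurableSet ({ω | V₁ ω ≤ a} ∩ ({ω | V₂ ω ≤ m} ∩ {ω | V₃ ω ≤ m})) := by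
    intro a m
    exact (hm₁ measurableSet_Iic).inter
      ((hm₂ measurableSet_Iic).inter (hm₃ measurableSet_Iic))
  -- the set W m = {V₁ = j+1} ∩ {V₂ ≤ m} ∩ {V₃ ≤ m}
  set W : ℕ → Set Ω := fun m =>
    {ω | V₁ ω = j + 1} ∩ ({ω | V₂ ω ≤ m} ∩ {ω | V₃ ω ≤ m}) with hWdef
  have mW : ∀ m, MeasurableSet (W m) := by
    intro m
    exact (hm₁ (measurableSet_singleton _)).inter
      ((hm₂ measurableSet_Iic).inter (hm₃ measurableSet_Iic))
  have hW : ∀ m : ℕ, (μ (W m)).toReal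
      = (edwCDF α p β₁ (j + 1) - edwCDF α p β₁ j)
        * (edwCDF α p β₂ m * edwCDF α p β₃ m) := by
    intro m
    have hWeq : W m = ({ω | V₁ ω ≤ j + 1} ∩ ({ω | V₂ ω ≤ m} ∩ {ω | V₃ ω ≤ m}))
        \ ({ω | V₁ ω ≤ j} ∩ ({ω | V₂ ω ≤ m} ∩ {ω | V₃ ω ≤ m})) := by
      ext ω
      simp only [hWdef, Set.mem_inter_iff, Set.mem_diff, Set.mem_setOf_eq]
      omega
    have hsub : ({ω | V₁ ω ≤ j} ∩ ({ω | V₂ ω ≤ m} ∩ {ω | V₃ ω ≤ m}))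
        ⊆ ({ω | V₁ ω ≤ j + 1} ∩ ({ω | V₂ ω ≤ m} ∩ {ω | V₃ ω ≤ m})) := by
      intro ω hω
      exact ⟨Nat.le_succ_of_le hω.1, hω.2⟩
    rw [hWeq, measure_diff hsub (mS j m).nullMeasurableSet (measure_ne_top μ _),
      ENNReal.toReal_sub_of_le (measure_mono hsub) (measure_ne_top μ _),
      key, key]
    ring
  -- monotonicity of W
  have hWmono : ∀ m : ℕ, W m ⊆ W (m + 1) := by
    intro m ω hω
    exact ⟨hω.1, Nat.le_succ_of_le hω.2.1, Nat.le_succ_of_le hω.2.2⟩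
  -- positivity needed for rpow_add
  have hpos : ∀ m : ℕ, (0 : ℝ) < 1 - p ^ (((m : ℝ) + 1) ^ α) := by
    intro m
    have h1 : (0 : ℝ) < ((m : ℝ) + 1) ^ α :=
      Real.rpow_pos_of_pos (by positivity) α
    have : p ^ (((m : ℝ) + 1) ^ α) < 1 := Real.rpow_lt_one hp0.le hp1 h1
    linarith
  have hmerge : ∀ m : ℕ, edwCDF α p β₂ m * edwCDF α p β₃ m
      = edwCDF α p (β₂ + β₃) m := by
    intro m
    rw [edwCDF, edwCDF, edwCDF]
    exact (Real.rpow_add (hpos m) β₂ β₃).symm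
  have hpmf₁ : edwPMF α p β₁ (j + 1)
      = edwCDF α p β₁ (j + 1) - edwCDF α p β₁ j := by
    rw [edwPMF, edwCDF, edwCDF]
    push_cast
    ring_nf
  -- now case on x₂
  cases x₂ with
  | zero =>
    have hE : {ω | max (V₁ ω) (V₃ ω) = j + 1 ∧ max (V₂ ω) (V₃ ω) = 0} = W 0 := by
      ext ω
      simp only [hWdef, Set.mem_inter_iff, Set.mem_setOf_eq]
      omega
    have hpmf₂ : edwPMF α p (β₂ + β₃) 0 = edwCDF α p (β₂ + β₃) 0 := by
      rw [edwPMF, edwCDF]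
      norm_num
      rw [Real.zero_rpow hα.ne', Real.rpow_zero]
      simp [Real.zero_rpow (by positivity : β₂ + β₃ ≠ 0)]
    rw [hE, hW 0, hmerge 0, hpmf₁, hpmf₂]
  | succ k =>
    have hE : {ω | max (V₁ ω) (V₃ ω) = j + 1 ∧ max (V₂ ω) (V₃ ω) = k + 1}
        = W (k + 1) \ W k := by
      ext ω
      simp only [hWdef, Set.mem_inter_iff, Set.mem_diff, Set.mem_setOf_eq]
      omega
    have hpmf₂ : edwPMF α p (β₂ + β₃) (k + 1)
        = edwCDF α p (β₂ + β₃) (k + 1) - edwCDF α p (β₂ + β₃) k := by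
      rw [edwPMF, edwCDF, edwCDF]
      push_cast
      ring_nf
    rw [hE, measure_diff (hWmono k) (mW k).nullMeasurableSet (measure_ne_top μ _),
      ENNReal.toReal_sub_of_le (measure_mono (hWmono k)) (measure_ne_top μ _),
      hW, hW, hmerge, hmerge, hpmf₁, hpmf₂]
    ring
end

section
/- Let 0 < p < 1 and α, β₁, β₂, β₃ > 0. Let V₁, V₂, V₃ be independent ℕ-valued random variables with P(Vᵢ ≤ x) = (1 − p^{(x+1)^α})^{βᵢ} for all x ∈ ℕ, and set X₁ = max{V₁, V₃}, X₂ = max{V₂, V₃}. Then for all x ∈ ℕ, P(X₁ = x, X₂ = x) = (1 − p^{(x+1)^α})^{β₁} · [(1 − p^{(x+1)^α})^{β₂+β₃} − (1 − p^{x^α})^{β₂+β₃}] − (1 − p^{x^α})^{β₁+β₃} · [(1 − p^{(x+1)^α})^{β₂} − (1 − p^{x^α})^{β₂}]. -/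
open MeasureTheory ProbabilityTheory

/-- The joint PMF of the BDEW distribution on the diagonal `x₁ = x₂ = x`. -/
theorem bdew_joint_pmf_diag
    {Ω : Type*} [MeasurableSpace Ω] (μ : Measure Ω) [IsProbabilityMeasure μ]
    (α p β₁ β₂ β₃ : ℝ)
    (hp0 : 0 < p) (hp1 : p < 1) (hα : 0 < α)
    (hβ₁ : 0 < β₁) (hβ₂ : 0 < β₂) (hβ₃ : 0 < β₃)
    (V₁ V₂ V₃ : Ω → ℕ)
    (hm₁ : Measurable V₁) (hm₂ : Measurable V₂) (hm₃ : Measurable V₃)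
    (hindep : iIndepFun ![V₁, V₂, V₃] μ)
    (hcdf₁ : ∀ x : ℕ, (μ {ω | V₁ ω ≤ x}).toReal = edwCDF α p β₁ x)
    (hcdf₂ : ∀ x : ℕ, (μ {ω | V₂ ω ≤ x}).toReal = edwCDF α p β₂ x)
    (hcdf₃ : ∀ x : ℕ, (μ {ω | V₃ ω ≤ x}).toReal = edwCDF α p β₃ x) :
    ∀ x : ℕ,
      (μ {ω | max (V₁ ω) (V₃ ω) = x ∧ max (V₂ ω) (V₃ ω) = x}).toReal =
        (1 - p ^ (((x : ℝ) + 1) ^ α)) ^ β₁ * edwPMF α p (β₂ + β₃) x -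
          (1 - p ^ ((x : ℝ) ^ α)) ^ (β₁ + β₃) * edwPMF α p β₂ x := by
  intro x
  -- independence product formula
  have hprod : ∀ (S₁ S₂ S₃ : Set ℕ),
      μ (V₁ ⁻¹' S₁ ∩ (V₂ ⁻¹' S₂ ∩ V₃ ⁻¹' S₃)) =
        μ (V₁ ⁻¹' S₁) * μ (V₂ ⁻¹' S₂) * μ (V₃ ⁻¹' S₃) := by
    intro S₁ S₂ S₃
    set s : Fin 3 → Set Ω := ![V₁ ⁻¹' S₁, V₂ ⁻¹' S₂, V₃ ⁻¹' S₃] with hs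
    have hmeas : ∀ i, MeasurableSet[MeasurableSpace.comap (![V₁, V₂, V₃] i) inferInstance] (s i) := by
      intro i
      fin_cases i
      · exact ⟨S₁, .of_discrete, rfl⟩
      · exact ⟨S₂, .of_discrete, rfl⟩
      · exact ⟨S₃, .of_discrete, rfl⟩
    have := hindep.meas_iInter hmeas
    have hI : (⋂ i, s i) = V₁ ⁻¹' S₁ ∩ (V₂ ⁻¹' S₂ ∩ V₃ ⁻¹' S₃) := by
      ext ω
      simp [hs, Fin.forall_fin_succ, and_assoc]
    rw [hI] at this
    rw [this, Fin.prod_univ_three]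
    simp [hs, mul_assoc]
  -- abbreviations
  set u : ℝ := 1 - p ^ (((x : ℝ) + 1) ^ α) with hu
  set v : ℝ := 1 - p ^ ((x : ℝ) ^ α) with hv
  have hv0 : 0 ≤ v := by
    have : p ^ ((x : ℝ) ^ α) ≤ 1 :=
      Real.rpow_le_one hp0.le hp1.le (Real.rpow_nonneg (Nat.cast_nonneg x) α)
    linarith
  have hu0 : 0 ≤ u := by
    have : p ^ (((x : ℝ) + 1) ^ α) ≤ 1 :=
      Real.rpow_le_one hp0.le hp1.le (Real.rpow_nonneg (by positivity) α)
    linarith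
  -- CDF values at x and strictly below x
  have hle : ∀ (V : Ω → ℕ) (β : ℝ),
      ((∀ y : ℕ, (μ {ω | V ω ≤ y}).toReal = edwCDF α p β y)) →
      (μ (V ⁻¹' {n | n ≤ x})).toReal = u ^ β := fun V β h => h x
  have hlt : ∀ (V : Ω → ℕ) (β : ℝ), 0 < β →
      ((∀ y : ℕ, (μ {ω | V ω ≤ y}).toReal = edwCDF α p β y)) →
      (μ (V ⁻¹' {n | n < x})).toReal = v ^ β := by
    intro V β hβ h
    cases x with
    | zero =>
      have : (V ⁻¹' {n | n < 0}) = ∅ := by ext ω; simp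
      rw [this]
      simp only [measure_empty, ENNReal.toReal_zero]
      rw [hv]
      norm_num
      rw [Real.zero_rpow hα.ne', Real.rpow_zero]
      simp [Real.zero_rpow hβ.ne']
    | succ n =>
      have : (V ⁻¹' {n_1 | n_1 < n + 1}) = {ω | V ω ≤ n} := by ext ω; simp [Nat.lt_succ_iff]
      rw [this, h n, edwCDF, hv]
      push_cast
      ring_nf
  -- the six basic events
  set A1 : Set Ω := V₁ ⁻¹' {n | n ≤ x} with hA1
  set A2 : Set Ω := V₂ ⁻¹' {n | n ≤ x} with hA2
  set A3 : Set Ω := V₃ ⁻¹' {n | n ≤ x} with hA3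
  set B1 : Set Ω := V₁ ⁻¹' {n | n < x} with hB1
  set B2 : Set Ω := V₂ ⁻¹' {n | n < x} with hB2
  set B3 : Set Ω := V₃ ⁻¹' {n | n < x} with hB3
  set A : Set Ω := A1 ∩ (A2 ∩ A3) with hA
  set B : Set Ω := B1 ∩ (A2 ∩ B3) with hB
  set C : Set Ω := A1 ∩ (B2 ∩ B3) with hC
  set D : Set Ω := B1 ∩ (B2 ∩ B3) with hD
  have hBC : B ∩ C = D := by
    ext ω
    simp only [hB, hC, hD, hA1, hA2, hA3, hB1, hB2, hB3, Set.mem_inter_iff, Set.mem_preimage, Set.mem_setOf_eq]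
    omega
  have hE : {ω | max (V₁ ω) (V₃ ω) = x ∧ max (V₂ ω) (V₃ ω) = x} = A \ (B ∪ C) := by
    ext ω
    simp only [hA, hB, hC, hA1, hA2, hA3, hB1, hB2, hB3, Set.mem_setOf_eq, Set.mem_diff, Set.mem_union, Set.mem_inter_iff,
      Set.mem_preimage]
    omega
  have hsub : B ∪ C ⊆ A := by
    intro ω hω
    simp only [hA, hB, hC, hA1, hA2, hA3, hB1, hB2, hB3, Set.mem_union, Set.mem_inter_iff, Set.mem_preimage,
      Set.mem_setOf_eq] at *
    omega
  have mB : MeasurableSet B := ((hm₁ .of_discrete).inter ((hm₂ .of_discrete).inter (hm₃ .of_discrete)))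
  have mC : MeasurableSet C := ((hm₁ .of_discrete).inter ((hm₂ .of_discrete).inter (hm₃ .of_discrete)))
  have hdiff : μ (A \ (B ∪ C)) = μ A - μ (B ∪ C) :=
    measure_diff hsub (mB.union mC).nullMeasurableSet (measure_ne_top μ _)
  have hunion : μ (B ∪ C) + μ D = μ B + μ C := by
    rw [← hBC]; exact measure_union_add_inter B mC
  -- pass to real numbers
  have hBCle : μ (B ∪ C) ≤ μ A := measure_mono hsub
  have htr : (μ {ω | max (V₁ ω) (V₃ ω) = x ∧ max (V₂ ω) (V₃ ω) = x}).toReal =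
      (μ A).toReal - (μ (B ∪ C)).toReal := by
    rw [hE, hdiff, ENNReal.toReal_sub_of_le hBCle (measure_ne_top μ _)]
  have htr2 : (μ (B ∪ C)).toReal = (μ B).toReal + (μ C).toReal - (μ D).toReal := by
    have := congrArg ENNReal.toReal hunion
    rw [ENNReal.toReal_add (measure_ne_top μ _) (measure_ne_top μ _),
      ENNReal.toReal_add (measure_ne_top μ _) (measure_ne_top μ _)] at this
    linarith
  -- product values
  have hAv : (μ A).toReal = u ^ β₁ * u ^ β₂ * u ^ β₃ := by
    rw [hA, hprod, ENNReal.toReal_mul, ENNReal.toReal_mul,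
      hle V₁ β₁ hcdf₁, hle V₂ β₂ hcdf₂, hle V₃ β₃ hcdf₃]
  have hBv : (μ B).toReal = v ^ β₁ * u ^ β₂ * v ^ β₃ := by
    rw [hB, hprod, ENNReal.toReal_mul, ENNReal.toReal_mul,
      hlt V₁ β₁ hβ₁ hcdf₁, hle V₂ β₂ hcdf₂, hlt V₃ β₃ hβ₃ hcdf₃]
  have hCv : (μ C).toReal = u ^ β₁ * v ^ β₂ * v ^ β₃ := by
    rw [hC, hprod, ENNReal.toReal_mul, ENNReal.toReal_mul,
      hle V₁ β₁ hcdf₁, hlt V₂ β₂ hβ₂ hcdf₂, hlt V₃ β₃ hβ₃ hcdf₃]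
  have hDv : (μ D).toReal = v ^ β₁ * v ^ β₂ * v ^ β₃ := by
    rw [hD, hprod, ENNReal.toReal_mul, ENNReal.toReal_mul,
      hlt V₁ β₁ hβ₁ hcdf₁, hlt V₂ β₂ hβ₂ hcdf₂, hlt V₃ β₃ hβ₃ hcdf₃]
  rw [htr, htr2, hAv, hBv, hCv, hDv, edwPMF, edwPMF, ← hu, ← hv,
    Real.rpow_add' hu0 (by positivity), Real.rpow_add' hv0 (by positivity),
    Real.rpow_add' hv0 (by positivity)]
  ring
end

section
/- Let 0 < p < 1 and α, β₁, β₂, β₃ > 0. Let V₁, V₂, V₃ be independent ℕ-valued random variables with P(Vᵢ ≤ x) = (1 − p^{(x+1)^α})^{βᵢ} for all x ∈ ℕ, and set X₁ = max{V₁, V₃}, X₂ = max{V₂, V₃}. Then for all real u, v with 0 ≤ u < 1 and 0 ≤ v < 1, the joint probability generating function satisfies E[u^{X₁} v^{X₂}] = Σ_{i=0}^∞ Σ_{j=i+1}^∞ f_EDW(i; α, p, β₁+β₃) f_EDW(j; α, p, β₂) u^i v^j + Σ_{j=0}^∞ Σ_{i=j+1}^∞ f_EDW(i; α, p, β₁)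 f_EDW(j; α, p, β₂+β₃) u^i v^j + Σ_{i=0}^∞ [(1 − p^{(i+1)^α})^{β₁} f_EDW(i; α, p, β₂+β₃) − (1 − p^{i^α})^{β₁+β₃} f_EDW(i; α, p, β₂)] u^i v^i, where f_EDW(x; α, p, β) = (1 − p^{(x+1)^α})^β − (1 − p^{x^α})^β. -/
open MeasureTheory ProbabilityTheory

/-- Theorem 1: the joint probability generating function of the BDEW distribution. -/
theorem bdew_pgf
    {Ω : Type*} [MeasurableSpace Ω] (μ : Measure Ω) [IsProbabilityMeasure μ]
    (α p β₁ β₂ β₃ : ℝ)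
    (hp0 : 0 < p) (hp1 : p < 1) (hα : 0 < α)
    (hβ₁ : 0 < β₁) (hβ₂ : 0 < β₂) (hβ₃ : 0 < β₃)
    (V₁ V₂ V₃ : Ω → ℕ)
    (hm₁ : Measurable V₁) (hm₂ : Measurable V₂) (hm₃ : Measurable V₃)
    (hindep : iIndepFun ![V₁, V₂, V₃] μ)
    (hcdf₁ : ∀ x : ℕ, (μ {ω | V₁ ω ≤ x}).toReal = edwCDF α p β₁ x)
    (hcdf₂ : ∀ x : ℕ, (μ {ω | V₂ ω ≤ x}).toReal = edwCDF α p β₂ x)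
    (hcdf₃ : ∀ x : ℕ, (μ {ω | V₃ ω ≤ x}).toReal = edwCDF α p β₃ x)
    (u v : ℝ) (hu0 : 0 ≤ u) (hu1 : u < 1) (hv0 : 0 ≤ v) (hv1 : v < 1) :
    (∫ ω, u ^ (max (V₁ ω) (V₃ ω)) * v ^ (max (V₂ ω) (V₃ ω)) ∂μ) =
      (∑' i : ℕ, ∑' j : ℕ,
        if i < j then edwPMF α p (β₁ + β₃) i * edwPMF α p β₂ j * u ^ i * v ^ j else 0) +
      (∑' j : ℕ, ∑' i : ℕ,
        if j < i then edwPMF α p β₁ i * edwPMF α p (β₂ + β₃) j * u ^ i * v ^ j else 0) +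
      (∑' i : ℕ,
        ((1 - p ^ (((i : ℝ) + 1) ^ α)) ^ β₁ * edwPMF α p (β₂ + β₃) i -
          (1 - p ^ ((i : ℝ) ^ α)) ^ (β₁ + β₃) * edwPMF α p β₂ i) * u ^ i * v ^ i) := by
  classical
  -- the scalar function `q x = p ^ (x ^ α)` and the "CDF family" `F β x = (1 - q x) ^ β`
  set q : ℕ → ℝ := fun x => p ^ ((x : ℝ) ^ α) with hq
  set F : ℝ → ℕ → ℝ := fun β x => (1 - q x) ^ β with hFdef
  have hq1 : ∀ x : ℕ, q x ≤ 1 := fun x =>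
    Real.rpow_le_one hp0.le hp1.le (Real.rpow_nonneg (Nat.cast_nonneg x) α)
  have hqnn : ∀ x : ℕ, 0 ≤ 1 - q x := fun x => by linarith [hq1 x]
  have hq0 : q 0 = 1 := by simp [hq, Real.zero_rpow hα.ne']
  have hF0 : ∀ b : ℝ, b ≠ 0 → F b 0 = 0 := fun b hb => by
    simp [hFdef, hq0, Real.zero_rpow hb]
  have hsplit : ∀ (b c : ℝ), 0 < b → 0 < c → ∀ x : ℕ, F (b + c) x = F b x * F c x :=
    fun b c hb hc x => Real.rpow_add' (hqnn x) (by positivity)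
  have hcast : ∀ (b : ℝ) (x : ℕ), F b (x + 1) = (1 - p ^ (((x : ℝ) + 1) ^ α)) ^ b := by
    intro b x
    have : ((x + 1 : ℕ) : ℝ) = (x : ℝ) + 1 := by push_cast; ring
    simp [hFdef, hq, this]
  have hCDF : ∀ (b : ℝ) (x : ℕ), edwCDF α p b x = F b (x + 1) := fun b x => (hcast b x).symm
  have hPMF : ∀ (b : ℝ) (x : ℕ), edwPMF α p b x = F b (x + 1) - F b x := by
    intro b x
    rw [edwPMF, ← hcast b x]
  -- the pair of maxima
  set Y : Ω → ℕ × ℕ := fun ω => (max (V₁ ω) (V₃ ω), max (V₂ ω) (V₃ ω)) with hY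
  have hmY : Measurable Y := ((hm₁.max hm₃).prodMk (hm₂.max hm₃))
  have hmsY : ∀ A : Set (ℕ × ℕ), MeasurableSet (Y ⁻¹' A) := fun A =>
    hmY MeasurableSet.of_discrete
  -- joint CDF of (X₁, X₂)
  have hle : ∀ a b : ℕ, (μ (Y ⁻¹' {y | y.1 ≤ a ∧ y.2 ≤ b})).toReal
      = F β₁ (a + 1) * F β₂ (b + 1) * F β₃ (min a b + 1) := by
    intro a b
    have hset : Y ⁻¹' {y | y.1 ≤ a ∧ y.2 ≤ b}
        = ⋂ i ∈ (Finset.univ : Finset (Fin 3)),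
            (![V₁, V₂, V₃] i) ⁻¹' (![Set.Iic a, Set.Iic b, Set.Iic (min a b)] i) := by
      ext ω
      simp [hY, Fin.forall_fin_succ, max_le_iff, le_min_iff]
      tauto
    have hmul := hindep.measure_inter_preimage_eq_mul (Finset.univ)
      (sets := ![Set.Iic a, Set.Iic b, Set.Iic (min a b)])
      (fun i _ => MeasurableSet.of_discrete)
    rw [hset, hmul, Fin.prod_univ_three]
    simp only [Matrix.cons_val_zero, Matrix.cons_val_one, Matrix.head_cons,
      Matrix.cons_val_two, Matrix.tail_cons]
    rw [ENNReal.toReal_mul, ENNReal.toReal_mul]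
    have e1 : V₁ ⁻¹' Set.Iic a = {ω | V₁ ω ≤ a} := rfl
    have e2 : V₂ ⁻¹' Set.Iic b = {ω | V₂ ω ≤ b} := rfl
    have e3 : V₃ ⁻¹' Set.Iic (min a b) = {ω | V₃ ω ≤ min a b} := rfl
    rw [e1, e2, e3, hcdf₁, hcdf₂, hcdf₃, hCDF, hCDF, hCDF]
  -- strict version, with the convenient convention built in at 0
  have hlt : ∀ a b : ℕ, (μ (Y ⁻¹' {y | y.1 < a ∧ y.2 < b})).toReal
      = F β₁ a * F β₂ b * F β₃ (min a b) := by
    intro a b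
    match a, b with
    | 0, b => simp [hF0 β₁ hβ₁.ne']
    | a + 1, 0 => simp [hF0 β₂ hβ₂.ne']
    | a + 1, b + 1 =>
      have : {y : ℕ × ℕ | y.1 < a + 1 ∧ y.2 < b + 1} = {y | y.1 ≤ a ∧ y.2 ≤ b} := by
        ext y; simp [Nat.lt_succ_iff]
      rw [this, hle]
      congr 2
      omega
  -- point masses of the pair
  set P : ℕ × ℕ → ℝ := fun y => (μ (Y ⁻¹' {y})).toReal with hPdef
  have hPnn : ∀ y, 0 ≤ P y := fun y => ENNReal.toReal_nonneg
  have hadd : ∀ (A B : Set (ℕ × ℕ)), Disjoint A B →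
      (μ (Y ⁻¹' (A ∪ B))).toReal = (μ (Y ⁻¹' A)).toReal + (μ (Y ⁻¹' B)).toReal := by
    intro A B hd
    rw [Set.preimage_union, measure_union (hd.preimage Y) (hmsY B),
      ENNReal.toReal_add (measure_ne_top μ _) (measure_ne_top μ _)]
  -- inclusion–exclusion for point masses
  have hP : ∀ a b : ℕ, P (a, b)
      = F β₁ (a + 1) * F β₂ (b + 1) * F β₃ (min (a + 1) (b + 1))
        - F β₁ a * F β₂ (b + 1) * F β₃ (min a (b + 1))
        - F β₁ (a + 1) * F β₂ b * F β₃ (min (a + 1) b)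
        + F β₁ a * F β₂ b * F β₃ (min a b) := by
    intro a b
    have h1 : {y : ℕ × ℕ | y.1 < a + 1 ∧ y.2 < b + 1}
        = ({y : ℕ × ℕ | y.1 < a ∧ y.2 < b + 1} ∪ {y : ℕ × ℕ | y.1 = a ∧ y.2 < b}) ∪ {(a, b)} := by
      ext y
      simp [Prod.ext_iff]
      omega
    have h2 : {y : ℕ × ℕ | y.1 < a + 1 ∧ y.2 < b}
        = {y : ℕ × ℕ | y.1 < a ∧ y.2 < b} ∪ {y : ℕ × ℕ | y.1 = a ∧ y.2 < b} := by
      ext y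
      simp
      omega
    have d1 : Disjoint ({y : ℕ × ℕ | y.1 < a ∧ y.2 < b + 1} ∪ {y : ℕ × ℕ | y.1 = a ∧ y.2 < b})
        ({(a, b)} : Set (ℕ × ℕ)) := by
      rw [Set.disjoint_singleton_right]
      simp
    have d2 : Disjoint {y : ℕ × ℕ | y.1 < a ∧ y.2 < b + 1} {y : ℕ × ℕ | y.1 = a ∧ y.2 < b} := by
      rw [Set.disjoint_left]
      rintro y hy hy'
      simp at hy hy'
      omega
    have d3 : Disjoint {y : ℕ × ℕ | y.1 < a ∧ y.2 < b} {y : ℕ × ℕ | y.1 = a ∧ y.2 < b} := by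
      rw [Set.disjoint_left]
      rintro y hy hy'
      simp at hy hy'
      omega
    have e1 := hadd _ _ d1
    rw [← h1, hadd _ _ d2] at e1
    have e2 := hadd _ _ d3
    rw [← h2] at e2
    have := hlt (a + 1) (b + 1)
    have := hlt a (b + 1)
    have := hlt (a + 1) b
    have := hlt a b
    have hPy : P (a, b) = (μ (Y ⁻¹' ({(a, b)} : Set (ℕ × ℕ)))).toReal := rfl
    rw [hPy]
    linarith
  -- the three regional formulas
  have hPlt : ∀ a b : ℕ, a < b → P (a, b) = edwPMF α p (β₁ + β₃) a * edwPMF α p β₂ b := by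
    intro a b hab
    rw [hP a b, min_eq_left (by omega : a + 1 ≤ b + 1), min_eq_left (by omega : a ≤ b + 1),
      min_eq_left (by omega : a + 1 ≤ b), min_eq_left (by omega : a ≤ b),
      hPMF, hPMF]
    simp only [hsplit β₁ β₃ hβ₁ hβ₃]
    ring
  have hPgt : ∀ a b : ℕ, b < a → P (a, b) = edwPMF α p β₁ a * edwPMF α p (β₂ + β₃) b := by
    intro a b hab
    rw [hP a b, min_eq_right (by omega : b + 1 ≤ a + 1), min_eq_right (by omega : b + 1 ≤ a),
      min_eq_right (by omega : b ≤ a + 1), min_eq_right (by omega : b ≤ a),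
      hPMF, hPMF]
    simp only [hsplit β₂ β₃ hβ₂ hβ₃]
    ring
  have hPeq : ∀ a : ℕ, P (a, a)
      = (F β₁ (a + 1) * edwPMF α p (β₂ + β₃) a - F (β₁ + β₃) a * edwPMF α p β₂ a) := by
    intro a
    rw [hP a a, min_self, min_eq_left (by omega : a ≤ a + 1),
      min_eq_right (by omega : a ≤ a + 1), min_self,
      hPMF, hPMF]
    simp only [hsplit β₂ β₃ hβ₂ hβ₃, hsplit β₁ β₃ hβ₁ hβ₃]
    ring
  -- rewrite the integral as a sum over point masses
  have hmap : IsProbabilityMeasure (μ.map Y) := Measure.isProbabilityMeasure_map hmY.aemeasurable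
  set g : ℕ × ℕ → ℝ := fun y => u ^ y.1 * v ^ y.2 with hg
  have hgnn : ∀ y, 0 ≤ g y := fun y => mul_nonneg (pow_nonneg hu0 _) (pow_nonneg hv0 _)
  have hgle : ∀ y, g y ≤ 1 := fun y =>
    mul_le_one₀ (pow_le_one₀ hu0 hu1.le) (pow_nonneg hv0 _) (pow_le_one₀ hv0 hv1.le)
  have hgm : Measurable g := measurable_of_countable g
  have hgint : Integrable g (μ.map Y) := by
    refine (integrable_const (1 : ℝ)).mono' hgm.aestronglyMeasurable ?_
    refine Filter.Eventually.of_forall fun y => ?_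
    rw [Real.norm_eq_abs, abs_of_nonneg (hgnn y)]
    exact hgle y
  have hint : (∫ ω, u ^ (max (V₁ ω) (V₃ ω)) * v ^ (max (V₂ ω) (V₃ ω)) ∂μ)
      = ∑' y : ℕ × ℕ, P y * g y := by
    have h1 : (∫ ω, u ^ (max (V₁ ω) (V₃ ω)) * v ^ (max (V₂ ω) (V₃ ω)) ∂μ)
        = ∫ y, g y ∂(μ.map Y) := by
      rw [integral_map hmY.aemeasurable hgm.aestronglyMeasurable]
    rw [h1, integral_countable' hgint]
    refine tsum_congr fun y => ?_
    rw [measureReal_def, Measure.map_apply hmY (MeasurableSet.of_discrete), smul_eq_mul, hPdef]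
  -- summability
  have hPsum : Summable P := by
    apply ENNReal.summable_toReal
    have hdisj : Pairwise (Function.onFun Disjoint fun y : ℕ × ℕ => Y ⁻¹' {y}) := by
      intro i j hij
      exact (Set.disjoint_singleton.2 hij).preimage Y
    rw [← measure_iUnion hdisj fun y => hmsY _]
    exact measure_ne_top μ _
  -- monotonicity and nonnegativity of the PMF
  have hFnat : ∀ (b : ℝ) (x : ℕ), F b x = (1 - p ^ ((x : ℝ) ^ α)) ^ b := fun b x => rfl
  have hqmono : ∀ x : ℕ, q (x + 1) ≤ q x := by
    intro x
    apply Real.rpow_le_rpow_of_exponent_ge hp0 hp1.le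
    apply Real.rpow_le_rpow (Nat.cast_nonneg x) (by push_cast; linarith) hα.le
  have hPMFnn : ∀ (b : ℝ), 0 ≤ b → ∀ x : ℕ, 0 ≤ edwPMF α p b x := by
    intro b hb x
    rw [hPMF]
    have h1 := hqmono x
    have h2 := hqnn x
    have := Real.rpow_le_rpow h2 (by linarith : 1 - q x ≤ 1 - q (x + 1)) hb
    linarith
  -- the three pieces
  set A : ℕ × ℕ → ℝ := fun y =>
    if y.1 < y.2 then edwPMF α p (β₁ + β₃) y.1 * edwPMF α p β₂ y.2 * u ^ y.1 * v ^ y.2 else 0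
    with hA
  set B : ℕ × ℕ → ℝ := fun y =>
    if y.2 < y.1 then edwPMF α p β₁ y.1 * edwPMF α p (β₂ + β₃) y.2 * u ^ y.1 * v ^ y.2 else 0
    with hB
  set C : ℕ × ℕ → ℝ := fun y =>
    if y.1 = y.2 then
      ((1 - p ^ (((y.1 : ℝ) + 1) ^ α)) ^ β₁ * edwPMF α p (β₂ + β₃) y.1 -
        (1 - p ^ ((y.1 : ℝ) ^ α)) ^ (β₁ + β₃) * edwPMF α p β₂ y.1) * u ^ y.1 * v ^ y.1 else 0
    with hC
  have hTsplit : ∀ y : ℕ × ℕ, P y * g y = A y + B y + C y := by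
    rintro ⟨a, b⟩
    rcases lt_trichotomy a b with h | h | h
    · rw [hA, hB, hC]
      simp only [if_pos h, if_neg (by omega : ¬ b < a), if_neg (by omega : ¬ a = b)]
      rw [hPlt a b h, hg]
      ring
    · subst h
      rw [hA, hB, hC]
      simp only [lt_self_iff_false, if_false, eq_self_iff_true, if_true]
      rw [hPeq a, hg, ← hcast β₁ a, ← hFnat (β₁ + β₃) a]
      ring
    · rw [hA, hB, hC]
      simp only [if_pos h, if_neg (by omega : ¬ a < b), if_neg (by omega : ¬ a = b)]
      rw [hPgt a b h, hg]
      ring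
  have hTnn : ∀ y, 0 ≤ P y * g y := fun y => mul_nonneg (hPnn y) (hgnn y)
  have hTsum : Summable (fun y => P y * g y) :=
    Summable.of_nonneg_of_le hTnn (fun y => mul_le_of_le_one_right (hPnn y) (hgle y)) hPsum
  have hABCnn : ∀ y, 0 ≤ A y ∧ 0 ≤ B y ∧ 0 ≤ C y := by
    rintro ⟨a, b⟩
    rcases lt_trichotomy a b with h | h | h
    · have hT := hTsplit (a, b)
      rw [hA, hB, hC] at hT ⊢
      simp only [if_pos h, if_neg (by omega : ¬ b < a), if_neg (by omega : ¬ a = b)] at hT ⊢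
      refine ⟨by linarith [hTnn (a, b)], le_refl 0, le_refl 0⟩
    · subst h
      have hT := hTsplit (a, a)
      rw [hA, hB, hC] at hT ⊢
      simp only [if_neg (lt_irrefl a), if_pos rfl] at hT ⊢
      refine ⟨le_refl 0, le_refl 0, by linarith [hTnn (a, a)]⟩
    · have hT := hTsplit (a, b)
      rw [hA, hB, hC] at hT ⊢
      simp only [if_pos h, if_neg (by omega : ¬ a < b), if_neg (by omega : ¬ a = b)] at hT ⊢
      refine ⟨le_refl 0, by linarith [hTnn (a, b)], le_refl 0⟩
  have hAle : ∀ y, A y ≤ P y * g y := by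
    intro y
    have := hTsplit y
    have h := hABCnn y
    linarith [h.1, h.2.1, h.2.2]
  have hBle : ∀ y, B y ≤ P y * g y := by
    intro y
    have := hTsplit y
    have h := hABCnn y
    linarith [h.1, h.2.1, h.2.2]
  have hCle : ∀ y, C y ≤ P y * g y := by
    intro y
    have := hTsplit y
    have h := hABCnn y
    linarith [h.1, h.2.1, h.2.2]
  have hAsum : Summable A := Summable.of_nonneg_of_le (fun y => (hABCnn y).1) hAle hTsum
  have hBsum : Summable B := Summable.of_nonneg_of_le (fun y => (hABCnn y).2.1) hBle hTsum
  have hCsum : Summable C := Summable.of_nonneg_of_le (fun y => (hABCnn y).2.2) hCle hTsum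
  -- identify the three pieces with the three sums on the RHS
  have hAeq : ∑' y : ℕ × ℕ, A y
      = ∑' i : ℕ, ∑' j : ℕ,
          if i < j then edwPMF α p (β₁ + β₃) i * edwPMF α p β₂ j * u ^ i * v ^ j else 0 := by
    rw [Summable.tsum_prod hAsum]
  have hBswapsum : Summable (fun z : ℕ × ℕ => B (z.2, z.1)) := by
    have := (Equiv.prodComm ℕ ℕ).summable_iff.2 hBsum
    exact this
  have hBeq : ∑' y : ℕ × ℕ, B y
      = ∑' j : ℕ, ∑' i : ℕ,
          if j < i then edwPMF α p β₁ i * edwPMF α p (β₂ + β₃) j * u ^ i * v ^ j else 0 := by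
    rw [← (Equiv.prodComm ℕ ℕ).tsum_eq B]
    rw [show ∑' c : ℕ × ℕ, B ((Equiv.prodComm ℕ ℕ) c) = ∑' c : ℕ × ℕ, B (c.2, c.1) from
      tsum_congr fun c => rfl]
    rw [Summable.tsum_prod hBswapsum]
  have hCeq : ∑' y : ℕ × ℕ, C y
      = ∑' i : ℕ,
          ((1 - p ^ (((i : ℝ) + 1) ^ α)) ^ β₁ * edwPMF α p (β₂ + β₃) i -
            (1 - p ^ ((i : ℝ) ^ α)) ^ (β₁ + β₃) * edwPMF α p β₂ i) * u ^ i * v ^ i := by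
    rw [Summable.tsum_prod hCsum]
    refine tsum_congr fun i => ?_
    rw [hC]
    simp only
    rw [tsum_eq_single i (fun j hj => if_neg (fun h => hj h.symm)), if_pos rfl]
  rw [hint, tsum_congr hTsplit,
    Summable.tsum_add (hAsum.add hBsum) hCsum, Summable.tsum_add hAsum hBsum, hAeq, hBeq, hCeq]
end

section
/- Let 0 < p < 1 and α, β₁, β₂, β₃ > 0. Let V₁, V₂, V₃ be independent ℕ-valued random variables with P(Vᵢ ≤ x) = (1 − p^{(x+1)^α})^{βᵢ} for all x ∈ ℕ, and set X₁ = max{V₁, V₃}, X₂ = max{V₂, V₃}. Then for i = 1, 2 and for all x ∈ ℕ, the marginal probability mass function satisfies P(Xᵢ = x) = (1 − p^{(x+1)^α})^{βᵢ+β₃} − (1 − p^{x^α})^{βᵢ+β₃}. -/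
open MeasureTheory ProbabilityTheory

lemma edw_base_pos {α p : ℝ} (hp0 : 0 < p) (hp1 : p < 1) (hα : 0 < α) (x : ℕ) :
    0 < 1 - p ^ (((x : ℝ) + 1) ^ α) := by
  have ht : (0:ℝ) < ((x : ℝ) + 1) ^ α := Real.rpow_pos_of_pos (by positivity) α
  have : p ^ (((x : ℝ) + 1) ^ α) < 1 := Real.rpow_lt_one hp0.le hp1 ht
  linarith

lemma edw_cdf_mul {α p βa βb : ℝ} (hp0 : 0 < p) (hp1 : p < 1) (hα : 0 < α) (x : ℕ) :
    edwCDF α p βa x * edwCDF α p βb x = edwCDF α p (βa + βb) x := by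
  unfold edwCDF
  rw [← Real.rpow_add (edw_base_pos hp0 hp1 hα x)]

lemma edw_max_cdf
    {Ω : Type*} [MeasurableSpace Ω] (μ : Measure Ω) [IsProbabilityMeasure μ]
    (α p βa βb : ℝ)
    (hp0 : 0 < p) (hp1 : p < 1) (hα : 0 < α)
    (V W : Ω → ℕ)
    (hind : IndepFun V W μ)
    (hV : ∀ x : ℕ, (μ {ω | V ω ≤ x}).toReal = edwCDF α p βa x)
    (hW : ∀ x : ℕ, (μ {ω | W ω ≤ x}).toReal = edwCDF α p βb x) :
    ∀ x : ℕ, (μ {ω | max (V ω) (W ω) ≤ x}).toReal = edwCDF α p (βa + βb) x := by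
  intro x
  have hset : {ω | max (V ω) (W ω) ≤ x} = V ⁻¹' (Set.Iic x) ∩ W ⁻¹' (Set.Iic x) := by
    ext ω; simp [max_le_iff]
  have hmul := hind.measure_inter_preimage_eq_mul (Set.Iic x) (Set.Iic x)
    measurableSet_Iic measurableSet_Iic
  rw [hset, hmul, ENNReal.toReal_mul]
  have h1 : V ⁻¹' (Set.Iic x) = {ω | V ω ≤ x} := rfl
  have h2 : W ⁻¹' (Set.Iic x) = {ω | W ω ≤ x} := rfl
  rw [h1, h2, hV, hW, edw_cdf_mul hp0 hp1 hα]

lemma edw_max_pmf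
    {Ω : Type*} [MeasurableSpace Ω] (μ : Measure Ω) [IsProbabilityMeasure μ]
    (α p βa βb : ℝ)
    (hp0 : 0 < p) (hp1 : p < 1) (hα : 0 < α) (hβa : 0 < βa) (hβb : 0 < βb)
    (V W : Ω → ℕ) (hmV : Measurable V) (hmW : Measurable W)
    (hind : IndepFun V W μ)
    (hV : ∀ x : ℕ, (μ {ω | V ω ≤ x}).toReal = edwCDF α p βa x)
    (hW : ∀ x : ℕ, (μ {ω | W ω ≤ x}).toReal = edwCDF α p βb x) :
    ∀ x : ℕ, (μ {ω | max (V ω) (W ω) = x}).toReal = edwPMF α p (βa + βb) x := by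
  have hcdf := edw_max_cdf μ α p βa βb hp0 hp1 hα V W hind hV hW
  intro x
  cases x with
  | zero =>
      have hset : {ω | max (V ω) (W ω) = 0} = {ω | max (V ω) (W ω) ≤ 0} := by
        ext ω; simp [Nat.le_zero]
      rw [hset, hcdf 0]
      unfold edwCDF edwPMF
      rw [show ((0:ℕ):ℝ) = (0:ℝ) by norm_num, Real.zero_rpow hα.ne',
        Real.rpow_zero]
      simp [Real.zero_rpow (by positivity : βa + βb ≠ 0)]
  | succ n =>
      have hsub : {ω | max (V ω) (W ω) ≤ n} ⊆ {ω | max (V ω) (W ω) ≤ n + 1} :=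
        fun ω h => le_trans h (Nat.le_succ n)
      have hset : {ω | max (V ω) (W ω) = n + 1} =
          {ω | max (V ω) (W ω) ≤ n + 1} \ {ω | max (V ω) (W ω) ≤ n} := by
        ext ω
        simp only [Set.mem_setOf_eq, Set.mem_diff, not_le]
        omega
      have hmeas : NullMeasurableSet {ω | max (V ω) (W ω) ≤ n} μ := by
        have h : {ω | max (V ω) (W ω) ≤ n} = V ⁻¹' (Set.Iic n) ∩ W ⁻¹' (Set.Iic n) := by
          ext ω; simp [max_le_iff]
        rw [h]
        exact ((hmV measurableSet_Iic).inter (hmW measurableSet_Iic)).nullMeasurableSet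
      have hfin : μ {ω | max (V ω) (W ω) ≤ n + 1} ≠ ⊤ := measure_ne_top μ _
      rw [hset, measure_diff hsub hmeas (measure_ne_top μ _),
        ENNReal.toReal_sub_of_le (measure_mono hsub) hfin, hcdf (n+1), hcdf n]
      unfold edwCDF edwPMF
      push_cast
      ring_nf

/-- The marginal PMFs of the BDEW distribution. -/
theorem bdew_marginal_pmf
    {Ω : Type*} [MeasurableSpace Ω] (μ : Measure Ω) [IsProbabilityMeasure μ]
    (α p β₁ β₂ β₃ : ℝ)
    (hp0 : 0 < p) (hp1 : p < 1) (hα : 0 < α)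
    (hβ₁ : 0 < β₁) (hβ₂ : 0 < β₂) (hβ₃ : 0 < β₃)
    (V₁ V₂ V₃ : Ω → ℕ)
    (hm₁ : Measurable V₁) (hm₂ : Measurable V₂) (hm₃ : Measurable V₃)
    (hindep : iIndepFun ![V₁, V₂, V₃] μ)
    (hcdf₁ : ∀ x : ℕ, (μ {ω | V₁ ω ≤ x}).toReal = edwCDF α p β₁ x)
    (hcdf₂ : ∀ x : ℕ, (μ {ω | V₂ ω ≤ x}).toReal = edwCDF α p β₂ x)
    (hcdf₃ : ∀ x : ℕ, (μ {ω | V₃ ω ≤ x}).toReal = edwCDF α p β₃ x) :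
    ∀ x : ℕ,
      (μ {ω | max (V₁ ω) (V₃ ω) = x}).toReal = edwPMF α p (β₁ + β₃) x ∧
      (μ {ω | max (V₂ ω) (V₃ ω) = x}).toReal = edwPMF α p (β₂ + β₃) x := by
  have h13 : IndepFun V₁ V₃ μ := by
    have := hindep.indepFun (i := 0) (j := 2) (by decide)
    simpa using this
  have h23 : IndepFun V₂ V₃ μ := by
    have := hindep.indepFun (i := 1) (j := 2) (by decide)
    simpa using this
  intro x
  exact ⟨edw_max_pmf μ α p β₁ β₃ hp0 hp1 hα hβ₁ hβ₃ V₁ V₃ hm₁ hm₃ h13 hcdf₁ hcdf₃ x,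
    edw_max_pmf μ α p β₂ β₃ hp0 hp1 hα hβ₂ hβ₃ V₂ V₃ hm₂ hm₃ h23 hcdf₂ hcdf₃ x⟩
end

section
/- Let 0 < p < 1 and α, β₁, β₂, β₃ > 0. Let V₁, V₂, V₃ be independent ℕ-valued random variables with P(Vᵢ ≤ x) = (1 − p^{(x+1)^α})^{βᵢ} for all x ∈ ℕ, and set X₁ = max{V₁, V₃}, X₂ = max{V₂, V₃}. Then for all x₁, x₂ ∈ ℕ the conditional probability mass function f(x₁ | x₂) = P(X₁ = x₁, X₂ = x₂) / P(X₂ = x₂) satisfies: (i) if x₁ < x₂, f(x₁ | x₂) = [(1 − p^{(x₁+1)^α})^{β₁+β₃} − (1 − p^{x₁^α})^{β₁+β₃}] · [(1 − p^{(x₂+1)^α})^{β₂} − (1 − p^{x₂^α})^{β₂}] / [(1 − p^{(x₂+1)^α})^{β₂+β₃} − (1 − p^{x₂^α})^{β₂+β₃}]; (ii) if x₂ < x₁, f(x₁ | x₂) = (1 − p^{(x₁+1)^α})^{β₁} − (1 − p^{x₁^α})^{β₁}; (iii) if x₁ = x₂ = x, f(x₁ | x₂) = (1 − p^{(x+1)^α})^{β₁}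 − (1 − p^{x^α})^{β₁+β₃} · [(1 − p^{(x+1)^α})^{β₂} − (1 − p^{x^α})^{β₂}] / [(1 − p^{(x+1)^α})^{β₂+β₃} − (1 − p^{x^α})^{β₂+β₃}]. -/
open MeasureTheory ProbabilityTheory

/-- The conditional PMF of `X₁` given `X₂ = x₂` for the BDEW distribution. -/
theorem bdew_conditional_pmf
    {Ω : Type*} [MeasurableSpace Ω] (μ : Measure Ω) [IsProbabilityMeasure μ]
    (α p β₁ β₂ β₃ : ℝ)
    (hp0 : 0 < p) (hp1 : p < 1) (hα : 0 < α)
    (hβ₁ : 0 < β₁) (hβ₂ : 0 < β₂) (hβ₃ : 0 < β₃)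
    (V₁ V₂ V₃ : Ω → ℕ)
    (hm₁ : Measurable V₁) (hm₂ : Measurable V₂) (hm₃ : Measurable V₃)
    (hindep : iIndepFun ![V₁, V₂, V₃] μ)
    (hcdf₁ : ∀ x : ℕ, (μ {ω | V₁ ω ≤ x}).toReal = edwCDF α p β₁ x)
    (hcdf₂ : ∀ x : ℕ, (μ {ω | V₂ ω ≤ x}).toReal = edwCDF α p β₂ x)
    (hcdf₃ : ∀ x : ℕ, (μ {ω | V₃ ω ≤ x}).toReal = edwCDF α p β₃ x) :
    ∀ x₁ x₂ : ℕ,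
      (x₁ < x₂ →
        (μ {ω | max (V₁ ω) (V₃ ω) = x₁ ∧ max (V₂ ω) (V₃ ω) = x₂}).toReal /
            (μ {ω | max (V₂ ω) (V₃ ω) = x₂}).toReal =
          edwPMF α p (β₁ + β₃) x₁ * edwPMF α p β₂ x₂ / edwPMF α p (β₂ + β₃) x₂) ∧
      (x₂ < x₁ →
        (μ {ω | max (V₁ ω) (V₃ ω) = x₁ ∧ max (V₂ ω) (V₃ ω) = x₂}).toReal /
            (μ {ω | max (V₂ ω) (V₃ ω) = x₂}).toReal =
          edwPMF α p β₁ x₁) ∧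
      (x₁ = x₂ →
        (μ {ω | max (V₁ ω) (V₃ ω) = x₁ ∧ max (V₂ ω) (V₃ ω) = x₂}).toReal /
            (μ {ω | max (V₂ ω) (V₃ ω) = x₂}).toReal =
          (1 - p ^ (((x₁ : ℝ) + 1) ^ α)) ^ β₁ -
            (1 - p ^ ((x₁ : ℝ) ^ α)) ^ (β₁ + β₃) * edwPMF α p β₂ x₁ /
              edwPMF α p (β₂ + β₃) x₁) := by
  -- the base function
  set b : ℕ → ℝ := fun x => 1 - p ^ ((x : ℝ) ^ α) with hbdef
  have hbsucc : ∀ x : ℕ, b (x + 1) = 1 - p ^ (((x : ℝ) + 1) ^ α) := by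
    intro x; simp only [hbdef]; push_cast; ring_nf
  have hb0 : ∀ x : ℕ, 0 ≤ b x := by
    intro x
    have : p ^ ((x : ℝ) ^ α) ≤ 1 :=
      Real.rpow_le_one hp0.le hp1.le (Real.rpow_nonneg (Nat.cast_nonneg x) α)
    simp only [hbdef]; linarith
  have hbmono : ∀ x : ℕ, b x < b (x + 1) := by
    intro x
    have hexp : (x : ℝ) ^ α < ((x : ℝ) + 1) ^ α :=
      Real.rpow_lt_rpow (Nat.cast_nonneg x) (lt_add_one _) hα
    have : p ^ (((x : ℝ) + 1) ^ α) < p ^ ((x : ℝ) ^ α) :=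
      Real.rpow_lt_rpow_of_exponent_gt hp0 hp1 hexp
    rw [hbsucc]; simp only [hbdef]; linarith
  have hpmfb : ∀ β : ℝ, ∀ x : ℕ, edwPMF α p β x = b (x + 1) ^ β - b x ^ β := by
    intro β x; rw [hbsucc]; simp [edwPMF, hbdef]
  have hcdfb : ∀ β : ℝ, ∀ x : ℕ, edwCDF α p β x = b (x + 1) ^ β := by
    intro β x; rw [hbsucc]; simp [edwCDF]
  have hpmfpos : ∀ β : ℝ, 0 < β → ∀ x : ℕ, 0 < b (x + 1) ^ β - b x ^ β := by
    intro β hβ x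
    have := Real.rpow_lt_rpow (hb0 x) (hbmono x) hβ
    linarith
  have hradd : ∀ (β β' : ℝ) (x : ℕ), 0 < β → 0 < β' →
      b x ^ (β + β') = b x ^ β * b x ^ β' := by
    intro β β' x hβ hβ'
    exact Real.rpow_add' (hb0 x) (by positivity)
  -- independence : product rule for triple intersections
  have hprod : ∀ S₁ S₂ S₃ : Set ℕ,
      μ (V₁ ⁻¹' S₁ ∩ V₂ ⁻¹' S₂ ∩ V₃ ⁻¹' S₃)
        = μ (V₁ ⁻¹' S₁) * μ (V₂ ⁻¹' S₂) * μ (V₃ ⁻¹' S₃) := by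
    intro S₁ S₂ S₃
    have h := hindep.meas_iInter
      (s := fun i => (![V₁, V₂, V₃] i) ⁻¹' (![S₁, S₂, S₃] i))
      (fun i => ⟨![S₁, S₂, S₃] i, MeasurableSet.of_discrete, rfl⟩)
    have hiI : (⋂ i, (![V₁, V₂, V₃] i) ⁻¹' (![S₁, S₂, S₃] i))
        = V₁ ⁻¹' S₁ ∩ V₂ ⁻¹' S₂ ∩ V₃ ⁻¹' S₃ := by
      ext ω
      simp [Set.mem_iInter, Fin.forall_fin_succ, and_assoc]
    rw [hiI, Fin.prod_univ_three] at h
    simpa using h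
  have htri : ∀ S₁ S₂ S₃ : Set ℕ,
      (μ (V₁ ⁻¹' S₁ ∩ V₂ ⁻¹' S₂ ∩ V₃ ⁻¹' S₃)).toReal
        = (μ (V₁ ⁻¹' S₁)).toReal * (μ (V₂ ⁻¹' S₂)).toReal * (μ (V₃ ⁻¹' S₃)).toReal := by
    intro S₁ S₂ S₃
    rw [hprod, ENNReal.toReal_mul, ENNReal.toReal_mul]
  have hmeas3 : ∀ S₁ S₂ S₃ : Set ℕ,
      MeasurableSet (V₁ ⁻¹' S₁ ∩ V₂ ⁻¹' S₂ ∩ V₃ ⁻¹' S₃) := fun S₁ S₂ S₃ =>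
    ((hm₁ .of_discrete).inter (hm₂ .of_discrete)).inter (hm₃ .of_discrete)
  have hls : ∀ x : ℕ, {n : ℕ | n < x} ⊆ {n : ℕ | n ≤ x} := by
    intro x n hn
    simp only [Set.mem_setOf_eq] at hn ⊢
    omega
  have hdiff : ∀ A B : Set Ω, B ⊆ A → MeasurableSet B →
      (μ (A \ B)).toReal = (μ A).toReal - (μ B).toReal := by
    intro A B hsub hB
    rw [measure_diff hsub hB.nullMeasurableSet (measure_ne_top μ B),
      ENNReal.toReal_sub_of_le (measure_mono hsub) (measure_ne_top μ A)]
  -- per-variable probabilities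
  have key : ∀ (V : Ω → ℕ) (β : ℝ), 0 < β → Measurable V →
      (∀ x : ℕ, (μ {ω | V ω ≤ x}).toReal = edwCDF α p β x) →
      (∀ x : ℕ, (μ (V ⁻¹' {n | n ≤ x})).toReal = b (x + 1) ^ β) ∧
      (∀ x : ℕ, (μ (V ⁻¹' {n | n < x})).toReal = b x ^ β) ∧
      (∀ x : ℕ, (μ (V ⁻¹' {x})).toReal = b (x + 1) ^ β - b x ^ β) := by
    intro V β hβ hm hc
    have hle : ∀ x : ℕ, (μ (V ⁻¹' {n | n ≤ x})).toReal = b (x + 1) ^ β := by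
      intro x
      have : V ⁻¹' {n | n ≤ x} = {ω | V ω ≤ x} := rfl
      rw [this, hc x, hcdfb]
    have hlt : ∀ x : ℕ, (μ (V ⁻¹' {n | n < x})).toReal = b x ^ β := by
      intro x
      cases x with
      | zero =>
        have : V ⁻¹' {n | n < 0} = ∅ := by ext ω; simp
        rw [this, measure_empty]
        have hb00 : b 0 = 0 := by
          simp [hbdef, Real.zero_rpow hα.ne']
        rw [hb00, Real.zero_rpow hβ.ne']
        simp
      | succ n =>
        have : V ⁻¹' {n' | n' < n + 1} = V ⁻¹' {n' | n' ≤ n} := by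
          ext ω; simp [Nat.lt_succ_iff]
        rw [this, hle n]
    refine ⟨hle, hlt, fun x => ?_⟩
    have hset : V ⁻¹' {x} = V ⁻¹' {n | n ≤ x} \ V ⁻¹' {n | n < x} := by
      ext ω; simp; omega
    rw [hset, hdiff (V ⁻¹' {n | n ≤ x}) (V ⁻¹' {n | n < x})
      (Set.preimage_mono (hls x)) (hm .of_discrete), hle, hlt]
  obtain ⟨h1le, h1lt, h1eq⟩ := key V₁ β₁ hβ₁ hm₁ hcdf₁
  obtain ⟨h2le, h2lt, h2eq⟩ := key V₂ β₂ hβ₂ hm₂ hcdf₂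
  obtain ⟨h3le, h3lt, h3eq⟩ := key V₃ β₃ hβ₃ hm₃ hcdf₃
  have huniv : (μ (V₁ ⁻¹' (Set.univ : Set ℕ))).toReal = 1 := by
    simp
  -- the denominator
  have hD : ∀ x : ℕ, (μ {ω | max (V₂ ω) (V₃ ω) = x}).toReal
      = b (x + 1) ^ (β₂ + β₃) - b x ^ (β₂ + β₃) := by
    intro x
    have hset : {ω | max (V₂ ω) (V₃ ω) = x}
        = (V₁ ⁻¹' Set.univ ∩ V₂ ⁻¹' {n | n ≤ x} ∩ V₃ ⁻¹' {n | n ≤ x})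
          \ (V₁ ⁻¹' Set.univ ∩ V₂ ⁻¹' {n | n < x} ∩ V₃ ⁻¹' {n | n < x}) := by
      ext ω
      simp only [Set.mem_setOf_eq, Set.mem_diff, Set.mem_inter_iff, Set.mem_preimage,
        Set.mem_univ, true_and, Set.mem_setOf_eq, not_and]
      omega
    have hsub : (V₁ ⁻¹' Set.univ ∩ V₂ ⁻¹' {n | n < x} ∩ V₃ ⁻¹' {n | n < x})
        ⊆ (V₁ ⁻¹' Set.univ ∩ V₂ ⁻¹' {n | n ≤ x} ∩ V₃ ⁻¹' {n | n ≤ x}) :=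
      Set.inter_subset_inter
        (Set.inter_subset_inter subset_rfl (Set.preimage_mono (hls _)))
        (Set.preimage_mono (hls _))
    rw [hset, hdiff _ _ hsub (hmeas3 _ _ _), htri, htri, huniv, h2le, h3le, h2lt, h3lt,
      hradd β₂ β₃ (x + 1) hβ₂ hβ₃, hradd β₂ β₃ x hβ₂ hβ₃]
    ring
  have hDpos : ∀ x : ℕ, 0 < b (x + 1) ^ (β₂ + β₃) - b x ^ (β₂ + β₃) :=
    hpmfpos _ (add_pos hβ₂ hβ₃)
  intro x₁ x₂
  refine ⟨fun h => ?_, fun h => ?_, fun h => ?_⟩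
  · -- case x₁ < x₂
    have hset : {ω | max (V₁ ω) (V₃ ω) = x₁ ∧ max (V₂ ω) (V₃ ω) = x₂}
        = (V₁ ⁻¹' {n | n ≤ x₁} ∩ V₂ ⁻¹' {x₂} ∩ V₃ ⁻¹' {n | n ≤ x₁})
          \ (V₁ ⁻¹' {n | n < x₁} ∩ V₂ ⁻¹' {x₂} ∩ V₃ ⁻¹' {n | n < x₁}) := by
      ext ω
      simp only [Set.mem_setOf_eq, Set.mem_diff, Set.mem_inter_iff, Set.mem_preimage,
        Set.mem_singleton_iff, not_and]
      omega
    have hsub : (V₁ ⁻¹' {n | n < x₁} ∩ V₂ ⁻¹' {x₂} ∩ V₃ ⁻¹' {n | n < x₁})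
        ⊆ (V₁ ⁻¹' {n | n ≤ x₁} ∩ V₂ ⁻¹' {x₂} ∩ V₃ ⁻¹' {n | n ≤ x₁}) :=
      Set.inter_subset_inter
        (Set.inter_subset_inter (Set.preimage_mono (hls _)) subset_rfl)
        (Set.preimage_mono (hls _))
    have hN : (μ {ω | max (V₁ ω) (V₃ ω) = x₁ ∧ max (V₂ ω) (V₃ ω) = x₂}).toReal
        = (b (x₁ + 1) ^ (β₁ + β₃) - b x₁ ^ (β₁ + β₃))
            * (b (x₂ + 1) ^ β₂ - b x₂ ^ β₂) := by
      rw [hset, hdiff _ _ hsub (hmeas3 _ _ _), htri, htri, h1le, h3le, h1lt, h3lt, h2eq,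
        hradd β₁ β₃ (x₁ + 1) hβ₁ hβ₃, hradd β₁ β₃ x₁ hβ₁ hβ₃]
      ring
    rw [hN, hD, hpmfb (β₁ + β₃), hpmfb β₂, hpmfb (β₂ + β₃)]
  · -- case x₂ < x₁
    have hset : {ω | max (V₁ ω) (V₃ ω) = x₁ ∧ max (V₂ ω) (V₃ ω) = x₂}
        = (V₁ ⁻¹' {x₁} ∩ V₂ ⁻¹' {n | n ≤ x₂} ∩ V₃ ⁻¹' {n | n ≤ x₂})
          \ (V₁ ⁻¹' {x₁} ∩ V₂ ⁻¹' {n | n < x₂} ∩ V₃ ⁻¹' {n | n < x₂}) := by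
      ext ω
      simp only [Set.mem_setOf_eq, Set.mem_diff, Set.mem_inter_iff, Set.mem_preimage,
        Set.mem_singleton_iff, not_and]
      omega
    have hsub : (V₁ ⁻¹' {x₁} ∩ V₂ ⁻¹' {n | n < x₂} ∩ V₃ ⁻¹' {n | n < x₂})
        ⊆ (V₁ ⁻¹' {x₁} ∩ V₂ ⁻¹' {n | n ≤ x₂} ∩ V₃ ⁻¹' {n | n ≤ x₂}) :=
      Set.inter_subset_inter
        (Set.inter_subset_inter subset_rfl (Set.preimage_mono (hls _)))
        (Set.preimage_mono (hls _))
    have hN : (μ {ω | max (V₁ ω) (V₃ ω) = x₁ ∧ max (V₂ ω) (V₃ ω) = x₂}).toReal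
        = (b (x₁ + 1) ^ β₁ - b x₁ ^ β₁)
            * (b (x₂ + 1) ^ (β₂ + β₃) - b x₂ ^ (β₂ + β₃)) := by
      rw [hset, hdiff _ _ hsub (hmeas3 _ _ _), htri, htri, h1eq, h2le, h3le, h2lt, h3lt,
        hradd β₂ β₃ (x₂ + 1) hβ₂ hβ₃, hradd β₂ β₃ x₂ hβ₂ hβ₃]
      ring
    rw [hN, hD, hpmfb β₁, mul_div_assoc,
      div_self (ne_of_gt (hDpos x₂)), mul_one]
  · -- case x₁ = x₂
    subst h
    have hset : {ω | max (V₁ ω) (V₃ ω) = x₁ ∧ max (V₂ ω) (V₃ ω) = x₁}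
        = (V₁ ⁻¹' {n | n ≤ x₁} ∩ V₂ ⁻¹' {n | n ≤ x₁} ∩ V₃ ⁻¹' {x₁})
          ∪ (V₁ ⁻¹' {x₁} ∩ V₂ ⁻¹' {x₁} ∩ V₃ ⁻¹' {n | n < x₁}) := by
      ext ω
      simp only [Set.mem_setOf_eq, Set.mem_union, Set.mem_inter_iff, Set.mem_preimage,
        Set.mem_singleton_iff]
      omega
    have hdisj : Disjoint
        (V₁ ⁻¹' {n | n ≤ x₁} ∩ V₂ ⁻¹' {n | n ≤ x₁} ∩ V₃ ⁻¹' {x₁})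
        (V₁ ⁻¹' {x₁} ∩ V₂ ⁻¹' {x₁} ∩ V₃ ⁻¹' {n | n < x₁}) := by
      rw [Set.disjoint_left]
      rintro ω ⟨-, h3⟩ ⟨-, h3'⟩
      simp only [Set.mem_preimage, Set.mem_singleton_iff, Set.mem_setOf_eq] at h3 h3'
      omega
    have hN : (μ {ω | max (V₁ ω) (V₃ ω) = x₁ ∧ max (V₂ ω) (V₃ ω) = x₁}).toReal
        = b (x₁ + 1) ^ β₁ * b (x₁ + 1) ^ β₂ * (b (x₁ + 1) ^ β₃ - b x₁ ^ β₃)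
          + (b (x₁ + 1) ^ β₁ - b x₁ ^ β₁) * (b (x₁ + 1) ^ β₂ - b x₁ ^ β₂) * b x₁ ^ β₃ := by
      rw [hset, measure_union hdisj (hmeas3 _ _ _),
        ENNReal.toReal_add (measure_ne_top μ _) (measure_ne_top μ _), htri, htri,
        h1le, h2le, h3eq, h1eq, h2eq, h3lt]
    rw [hN, hD, hpmfb β₂, hpmfb (β₂ + β₃), ← hbsucc]
    have hA : (1 - p ^ ((x₁ : ℝ) ^ α)) = b x₁ := rfl
    rw [hA]
    set A := b (x₁ + 1)
    set B := b x₁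
    have hd : A ^ (β₂ + β₃) - B ^ (β₂ + β₃) ≠ 0 := ne_of_gt (hDpos x₁)
    rw [hradd β₂ β₃ (x₁ + 1) hβ₂ hβ₃, hradd β₂ β₃ x₁ hβ₂ hβ₃,
      hradd β₁ β₃ x₁ hβ₁ hβ₃] at *
    field_simp
    ring
end

section
/- Let 0 < p < 1 and α, β₁, β₂, β₃ > 0. Let V₁, V₂, V₃ be independent ℕ-valued random variables with P(Vᵢ ≤ x) = (1 − p^{(x+1)^α})^{βᵢ} for all x ∈ ℕ, and set X₁ = max{V₁, V₃}, X₂ = max{V₂, V₃}. Then for all x₁, x₂ ∈ ℕ the conditional cumulative distribution function F(x₁ | X₂ ≤ x₂) = P(X₁ ≤ x₁, X₂ ≤ x₂) / P(X₂ ≤ x₂) satisfies: (i) if x₁ < x₂, F(x₁ | X₂ ≤ x₂) = (1 − p^{(x₁+1)^α})^{β₁+β₃} · (1 − p^{(x₂+1)^α})^{−β₃}; (ii) if x₂ < x₁, F(x₁ | X₂ ≤ x₂) = (1 − p^{(x₁+1)^α})^{β₁}; (iii) if x₁ = x₂ = x, F(x₁ | X₂ ≤ x₂) = (1 − p^{(x+1)^α})^{β₁}.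 -/
open MeasureTheory ProbabilityTheory

/-- The conditional CDF of `X₁` given `X₂ ≤ x₂` for the BDEW distribution. -/
theorem bdew_conditional_cdf_le
    {Ω : Type*} [MeasurableSpace Ω] (μ : Measure Ω) [IsProbabilityMeasure μ]
    (α p β₁ β₂ β₃ : ℝ)
    (hp0 : 0 < p) (hp1 : p < 1) (hα : 0 < α)
    (hβ₁ : 0 < β₁) (hβ₂ : 0 < β₂) (hβ₃ : 0 < β₃)
    (V₁ V₂ V₃ : Ω → ℕ)
    (hm₁ : Measurable V₁) (hm₂ : Measurable V₂) (hm₃ : Measurable V₃)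
    (hindep : iIndepFun ![V₁, V₂, V₃] μ)
    (hcdf₁ : ∀ x : ℕ, (μ {ω | V₁ ω ≤ x}).toReal = edwCDF α p β₁ x)
    (hcdf₂ : ∀ x : ℕ, (μ {ω | V₂ ω ≤ x}).toReal = edwCDF α p β₂ x)
    (hcdf₃ : ∀ x : ℕ, (μ {ω | V₃ ω ≤ x}).toReal = edwCDF α p β₃ x) :
    ∀ x₁ x₂ : ℕ,
      (x₁ < x₂ →
        (μ {ω | max (V₁ ω) (V₃ ω) ≤ x₁ ∧ max (V₂ ω) (V₃ ω) ≤ x₂}).toReal /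
            (μ {ω | max (V₂ ω) (V₃ ω) ≤ x₂}).toReal =
          edwCDF α p (β₁ + β₃) x₁ * (1 - p ^ (((x₂ : ℝ) + 1) ^ α)) ^ (-β₃)) ∧
      (x₂ < x₁ →
        (μ {ω | max (V₁ ω) (V₃ ω) ≤ x₁ ∧ max (V₂ ω) (V₃ ω) ≤ x₂}).toReal /
            (μ {ω | max (V₂ ω) (V₃ ω) ≤ x₂}).toReal =
          edwCDF α p β₁ x₁) ∧
      (x₁ = x₂ →
        (μ {ω | max (V₁ ω) (V₃ ω) ≤ x₁ ∧ max (V₂ ω) (V₃ ω) ≤ x₂}).toReal /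
            (μ {ω | max (V₂ ω) (V₃ ω) ≤ x₂}).toReal =
          edwCDF α p β₁ x₁) := by
  -- product formula for three events
  have prod3 : ∀ a b c : ℕ, μ {ω | V₁ ω ≤ a ∧ V₂ ω ≤ b ∧ V₃ ω ≤ c}
      = μ {ω | V₁ ω ≤ a} * μ {ω | V₂ ω ≤ b} * μ {ω | V₃ ω ≤ c} := by
    intro a b c
    have h := hindep.meas_iInter
      (s := fun i => (![V₁, V₂, V₃] i) ⁻¹' {n | n ≤ ![a, b, c] i})
      (fun i => ⟨{n | n ≤ ![a, b, c] i}, trivial, rfl⟩)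
    have hset : (⋂ i, (![V₁, V₂, V₃] i) ⁻¹' {n | n ≤ ![a, b, c] i})
        = {ω | V₁ ω ≤ a ∧ V₂ ω ≤ b ∧ V₃ ω ≤ c} := by
      ext ω
      simp [Set.mem_iInter, Fin.forall_fin_succ]
    rw [hset, Fin.prod_univ_three] at h
    simpa using h
  have prod2 : ∀ b c : ℕ, μ {ω | V₂ ω ≤ b ∧ V₃ ω ≤ c}
      = μ {ω | V₂ ω ≤ b} * μ {ω | V₃ ω ≤ c} := by
    intro b c
    have h := (hindep.indepFun (show (1 : Fin 3) ≠ 2 by decide)).measure_inter_preimage_eq_mul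
      (s := {n | n ≤ b}) (t := {n | n ≤ c}) trivial trivial
    simpa [Set.inter_def] using h
  -- positivity facts
  have hbase : ∀ x : ℕ, 0 < 1 - p ^ (((x : ℝ) + 1) ^ α) := by
    intro x
    have ht : (0 : ℝ) < ((x : ℝ) + 1) ^ α := by positivity
    have : p ^ (((x : ℝ) + 1) ^ α) < 1 := Real.rpow_lt_one hp0.le hp1 ht
    linarith
  have hpos : ∀ (β : ℝ) (x : ℕ), 0 < edwCDF α p β x := fun β x =>
    Real.rpow_pos_of_pos (hbase x) β
  -- measures are finite
  have hfin : ∀ s : Set Ω, μ s ≠ ⊤ := fun s => measure_ne_top μ s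
  intro x₁ x₂
  have hnum : ∀ c : ℕ, ({ω | max (V₁ ω) (V₃ ω) ≤ x₁ ∧ max (V₂ ω) (V₃ ω) ≤ x₂} : Set Ω)
      = {ω | V₁ ω ≤ x₁ ∧ V₂ ω ≤ x₂ ∧ V₃ ω ≤ min x₁ x₂} := by
    intro _
    ext ω
    simp only [Set.mem_setOf_eq, max_le_iff, le_min_iff]
    tauto
  have hden : ({ω | max (V₂ ω) (V₃ ω) ≤ x₂} : Set Ω) = {ω | V₂ ω ≤ x₂ ∧ V₃ ω ≤ x₂} := by
    ext ω
    simp [max_le_iff]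
  have hnumval : (μ {ω | max (V₁ ω) (V₃ ω) ≤ x₁ ∧ max (V₂ ω) (V₃ ω) ≤ x₂}).toReal
      = edwCDF α p β₁ x₁ * edwCDF α p β₂ x₂ * edwCDF α p β₃ (min x₁ x₂) := by
    rw [hnum 0, prod3, ENNReal.toReal_mul, ENNReal.toReal_mul, hcdf₁, hcdf₂, hcdf₃]
  have hdenval : (μ {ω | max (V₂ ω) (V₃ ω) ≤ x₂}).toReal
      = edwCDF α p β₂ x₂ * edwCDF α p β₃ x₂ := by
    rw [hden, prod2, ENNReal.toReal_mul, hcdf₂, hcdf₃]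
  refine ⟨fun h12 => ?_, fun h21 => ?_, fun heq => ?_⟩
  · rw [hnumval, hdenval, min_eq_left h12.le]
    have e1 : edwCDF α p (β₁ + β₃) x₁ = edwCDF α p β₁ x₁ * edwCDF α p β₃ x₁ := by
      simp only [edwCDF]
      rw [Real.rpow_add (hbase x₁)]
    have e2 : (1 - p ^ (((x₂ : ℝ) + 1) ^ α)) ^ (-β₃) = (edwCDF α p β₃ x₂)⁻¹ := by
      simp only [edwCDF]
      rw [Real.rpow_neg (hbase x₂).le]
    rw [e1, e2]
    have h2 := (hpos β₂ x₂).ne'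
    have h3 := (hpos β₃ x₂).ne'
    field_simp
  · rw [hnumval, hdenval, min_eq_right h21.le]
    have h2 := (hpos β₂ x₂).ne'
    have h3 := (hpos β₃ x₂).ne'
    field_simp
  · subst heq
    rw [hnumval, hdenval, min_self]
    have h2 := (hpos β₂ x₁).ne'
    have h3 := (hpos β₃ x₁).ne'
    field_simp
end

section
/- Let 0 < p < 1 and α, β₁, β₂, β₃ > 0. Let V₁, V₂, V₃ be independent ℕ-valued random variables with P(Vᵢ ≤ x) = (1 − p^{(x+1)^α})^{βᵢ} for all x ∈ ℕ, and set X₁ = max{V₁, V₃}, X₂ = max{V₂, V₃}. Write F_EDW(x; β) = (1 − p^{(x+1)^α})^β and f_EDW(x; β) = (1 − p^{(x+1)^α})^β − (1 − p^{x^α})^β. Then for all x₁, x₂ ∈ ℕ the conditional CDF F(x₁ | X₂ = x₂) = P(X₁ ≤ x₁, X₂ = x₂) / P(X₂ = x₂) satisfies: (i) if x₁ < x₂, F(x₁ | X₂ = x₂) = F_EDW(x₁; β₁+β₃) f_EDW(x₂; β₂) / f_EDW(x₂; β₂+β₃); (ii) if x₂ < x₁, F(x₁ | X₂ = x₂) =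 F_EDW(x₁; β₁); (iii) if x₁ = x₂ = x, F(x₁ | X₂ = x₂) = [F_EDW(x; β₁+β₂+β₃) − F_EDW(x; β₁) F_EDW(x−1; β₂+β₃)] / f_EDW(x; β₂+β₃), where for x = 0 the term F_EDW(x−1; β₂+β₃) is interpreted as 0. -/
open MeasureTheory ProbabilityTheory

/-- The conditional CDF of `X₁` given `X₂ = x₂` for the BDEW distribution.
In case (iii) the term `F_EDW(x-1; β₂+β₃) = (1 - p^(x^α))^(β₂+β₃)`, which is `0` when `x = 0`
(since `p^(0^α) = 1` for `α > 0`). -/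
theorem bdew_conditional_cdf_eq
    {Ω : Type*} [MeasurableSpace Ω] (μ : Measure Ω) [IsProbabilityMeasure μ]
    (α p β₁ β₂ β₃ : ℝ)
    (hp0 : 0 < p) (hp1 : p < 1) (hα : 0 < α)
    (hβ₁ : 0 < β₁) (hβ₂ : 0 < β₂) (hβ₃ : 0 < β₃)
    (V₁ V₂ V₃ : Ω → ℕ)
    (hm₁ : Measurable V₁) (hm₂ : Measurable V₂) (hm₃ : Measurable V₃)
    (hindep : iIndepFun ![V₁, V₂, V₃] μ)
    (hcdf₁ : ∀ x : ℕ, (μ {ω | V₁ ω ≤ x}).toReal = edwCDF α p β₁ x)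
    (hcdf₂ : ∀ x : ℕ, (μ {ω | V₂ ω ≤ x}).toReal = edwCDF α p β₂ x)
    (hcdf₃ : ∀ x : ℕ, (μ {ω | V₃ ω ≤ x}).toReal = edwCDF α p β₃ x) :
    ∀ x₁ x₂ : ℕ,
      (x₁ < x₂ →
        (μ {ω | max (V₁ ω) (V₃ ω) ≤ x₁ ∧ max (V₂ ω) (V₃ ω) = x₂}).toReal /
            (μ {ω | max (V₂ ω) (V₃ ω) = x₂}).toReal =
          edwCDF α p (β₁ + β₃) x₁ * edwPMF α p β₂ x₂ / edwPMF α p (β₂ + β₃) x₂) ∧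
      (x₂ < x₁ →
        (μ {ω | max (V₁ ω) (V₃ ω) ≤ x₁ ∧ max (V₂ ω) (V₃ ω) = x₂}).toReal /
            (μ {ω | max (V₂ ω) (V₃ ω) = x₂}).toReal =
          edwCDF α p β₁ x₁) ∧
      (x₁ = x₂ →
        (μ {ω | max (V₁ ω) (V₃ ω) ≤ x₁ ∧ max (V₂ ω) (V₃ ω) = x₂}).toReal /
            (μ {ω | max (V₂ ω) (V₃ ω) = x₂}).toReal =
          (edwCDF α p (β₁ + β₂ + β₃) x₁ -
              edwCDF α p β₁ x₁ * (1 - p ^ ((x₁ : ℝ) ^ α)) ^ (β₂ + β₃)) /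
            edwPMF α p (β₂ + β₃) x₁) := by
  -- real-analytic preliminaries
  have hbase : ∀ x : ℕ, 0 < 1 - p ^ (((x : ℝ) + 1) ^ α) := by
    intro x
    have hz : (0:ℝ) < ((x : ℝ) + 1) ^ α := Real.rpow_pos_of_pos (by positivity) α
    have := Real.rpow_lt_one hp0.le hp1 hz
    linarith
  have hbase0 : ∀ x : ℕ, 0 ≤ 1 - p ^ ((x : ℝ) ^ α) := by
    intro x
    have := Real.rpow_le_one hp0.le hp1.le (Real.rpow_nonneg x.cast_nonneg α)
    linarith
  have hmul : ∀ (b c : ℝ) (x : ℕ),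
      edwCDF α p (b + c) x = edwCDF α p b x * edwCDF α p c x := by
    intro b c x
    unfold edwCDF
    rw [Real.rpow_add (hbase x)]
  have hG0 : (1 - p ^ ((0:ℝ) ^ α)) = 0 := by
    rw [Real.zero_rpow hα.ne', Real.rpow_zero]; ring
  have hpmf0 : ∀ b : ℝ, 0 < b → edwPMF α p b 0 = edwCDF α p b 0 := by
    intro b hb
    unfold edwPMF edwCDF
    rw [Nat.cast_zero, hG0, Real.zero_rpow hb.ne']
    ring
  have hpmfs : ∀ (b : ℝ) (k : ℕ),
      edwPMF α p b (k + 1) = edwCDF α p b (k + 1) - edwCDF α p b k := by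
    intro b k
    unfold edwPMF edwCDF
    push_cast
    ring_nf
  -- positivity of the EDW pmf
  have hpmf_pos : ∀ (b : ℝ), 0 < b → ∀ x : ℕ, 0 < edwPMF α p b x := by
    intro b hb x
    have hexp : (x : ℝ) ^ α < ((x : ℝ) + 1) ^ α :=
      Real.rpow_lt_rpow x.cast_nonneg (lt_add_one _) hα
    have hlt : p ^ (((x : ℝ) + 1) ^ α) < p ^ ((x : ℝ) ^ α) :=
      Real.rpow_lt_rpow_of_exponent_gt hp0 hp1 hexp
    have : (1 - p ^ ((x : ℝ) ^ α)) ^ b < (1 - p ^ (((x : ℝ) + 1) ^ α)) ^ b :=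
      Real.rpow_lt_rpow (hbase0 x) (by linarith) hb
    unfold edwPMF
    linarith
  -- independence: triple products
  have key : ∀ A B C : Set ℕ,
      μ (V₁ ⁻¹' A ∩ V₂ ⁻¹' B ∩ V₃ ⁻¹' C)
        = μ (V₁ ⁻¹' A) * μ (V₂ ⁻¹' B) * μ (V₃ ⁻¹' C) := by
    intro A B C
    have h := hindep.measure_inter_preimage_eq_mul Finset.univ
      (sets := ![A, B, C]) (fun i _ => trivial)
    have hset : (⋂ i ∈ Finset.univ, (![V₁, V₂, V₃] i) ⁻¹' (![A, B, C] i))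
        = V₁ ⁻¹' A ∩ V₂ ⁻¹' B ∩ V₃ ⁻¹' C := by
      ext ω
      simp [Fin.forall_fin_succ, and_assoc]
    rw [hset, Fin.prod_univ_three] at h
    simpa using h
  -- telescoping step
  have step : ∀ (S : Set Ω), MeasurableSet S → ∀ (W : Ω → ℕ), Measurable W → ∀ x : ℕ,
      (μ (S ∩ {ω | W ω ≤ x + 1})).toReal
        = (μ (S ∩ {ω | W ω ≤ x})).toReal + (μ (S ∩ {ω | W ω = x + 1})).toReal := by
    intro S hS W hW x
    have hu : S ∩ {ω | W ω ≤ x + 1}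
        = (S ∩ {ω | W ω ≤ x}) ∪ (S ∩ {ω | W ω = x + 1}) := by
      ext ω
      simp only [Set.mem_inter_iff, Set.mem_setOf_eq, Set.mem_union]
      constructor
      · rintro ⟨hs, h⟩
        rcases Nat.lt_or_ge (W ω) (x + 1) with h' | h'
        · exact Or.inl ⟨hs, Nat.lt_succ_iff.mp h'⟩
        · exact Or.inr ⟨hs, le_antisymm h h'⟩
      · rintro (⟨hs, h⟩ | ⟨hs, h⟩)
        · exact ⟨hs, h.trans (Nat.le_succ x)⟩
        · exact ⟨hs, h.le⟩
    have hdisj : Disjoint (S ∩ {ω | W ω ≤ x}) (S ∩ {ω | W ω = x + 1}) := by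
      rw [Set.disjoint_left]
      rintro ω ⟨_, h1⟩ ⟨_, h2⟩
      simp only [Set.mem_setOf_eq] at h1 h2
      omega
    rw [hu, measure_union hdisj (hS.inter (hW (measurableSet_singleton (x + 1)))),
      ENNReal.toReal_add (measure_ne_top _ _) (measure_ne_top _ _)]
  -- generic pmf-from-cdf extraction
  have genpmf : ∀ (S : Set Ω), MeasurableSet S → ∀ (W : Ω → ℕ), Measurable W →
      ∀ (c b : ℝ), 0 < b →
      (∀ y : ℕ, (μ (S ∩ {ω | W ω ≤ y})).toReal = c * edwCDF α p b y) →
      ∀ y : ℕ, (μ (S ∩ {ω | W ω = y})).toReal = c * edwPMF α p b y := by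
    intro S hS W hWm c b hb hSc y
    induction y with
    | zero =>
      have h0 : {ω | W ω = 0} = {ω | W ω ≤ 0} := by
        ext ω; simp [Nat.le_zero]
      rw [h0, hSc 0, hpmf0 b hb]
    | succ k _ =>
      have hstep := step S hS W hWm k
      rw [hSc k, hSc (k + 1)] at hstep
      rw [hpmfs]
      linarith
  have hWm : Measurable fun ω => max (V₂ ω) (V₃ ω) := hm₂.max hm₃
  have hS1m : ∀ x : ℕ, MeasurableSet {ω | V₁ ω ≤ x} := fun x => measurableSet_le hm₁ measurable_const
  -- cdf of {V₁ ≤ x₁} ∩ {max(V₂,V₃) ≤ y}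
  have hjoint : ∀ x₁ y : ℕ,
      (μ ({ω | V₁ ω ≤ x₁} ∩ {ω | max (V₂ ω) (V₃ ω) ≤ y})).toReal
        = edwCDF α p β₁ x₁ * edwCDF α p (β₂ + β₃) y := by
    intro x₁ y
    have hset : {ω | V₁ ω ≤ x₁} ∩ {ω | max (V₂ ω) (V₃ ω) ≤ y}
        = V₁ ⁻¹' {n | n ≤ x₁} ∩ V₂ ⁻¹' {n | n ≤ y} ∩ V₃ ⁻¹' {n | n ≤ y} := by
      ext ω
      simp [max_le_iff, and_assoc]
    rw [hset, key, ENNReal.toReal_mul, ENNReal.toReal_mul]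
    have h1 := hcdf₁ x₁
    have h2 := hcdf₂ y
    have h3 := hcdf₃ y
    simp only [Set.preimage_setOf_eq]
    rw [h1, h2, h3, hmul β₂ β₃ y, mul_assoc]
  have hjointpmf : ∀ x₁ y : ℕ,
      (μ ({ω | V₁ ω ≤ x₁} ∩ {ω | max (V₂ ω) (V₃ ω) = y})).toReal
        = edwCDF α p β₁ x₁ * edwPMF α p (β₂ + β₃) y := fun x₁ y =>
    genpmf _ (hS1m x₁) _ hWm _ _ (by linarith) (hjoint x₁) y
  -- cdf and pmf of max(V₂,V₃)
  have hDcdf : ∀ y : ℕ,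
      (μ (Set.univ ∩ {ω | max (V₂ ω) (V₃ ω) ≤ y})).toReal = 1 * edwCDF α p (β₂ + β₃) y := by
    intro y
    have hset : (Set.univ : Set Ω) ∩ {ω | max (V₂ ω) (V₃ ω) ≤ y}
        = V₁ ⁻¹' Set.univ ∩ V₂ ⁻¹' {n | n ≤ y} ∩ V₃ ⁻¹' {n | n ≤ y} := by
      ext ω
      simp [max_le_iff, and_assoc]
    rw [hset, key, ENNReal.toReal_mul, ENNReal.toReal_mul]
    have h2 := hcdf₂ y
    have h3 := hcdf₃ y
    simp only [Set.preimage_setOf_eq, Set.preimage_univ, measure_univ, ENNReal.toReal_one]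
    rw [h2, h3, hmul β₂ β₃ y]; ring
  have hDen : ∀ y : ℕ,
      (μ {ω | max (V₂ ω) (V₃ ω) = y}).toReal = edwPMF α p (β₂ + β₃) y := by
    intro y
    have := genpmf Set.univ MeasurableSet.univ _ hWm 1 (β₂ + β₃) (by linarith) hDcdf y
    simpa using this
  -- pmf of V₂
  have hpmf2 : ∀ y : ℕ, (μ (V₂ ⁻¹' {y})).toReal = edwPMF α p β₂ y := by
    intro y
    have hc : ∀ z : ℕ, (μ ((Set.univ : Set Ω) ∩ {ω | V₂ ω ≤ z})).toReal
        = 1 * edwCDF α p β₂ z := by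
      intro z
      simp only [Set.univ_inter, one_mul]
      exact hcdf₂ z
    have := genpmf Set.univ MeasurableSet.univ V₂ hm₂ 1 β₂ hβ₂ hc y
    rw [show V₂ ⁻¹' {y} = {ω | V₂ ω = y} from rfl]
    simpa using this
  -- the event set when x₂ ≤ x₁
  have hE2 : ∀ x₁ x₂ : ℕ, x₂ ≤ x₁ →
      {ω | max (V₁ ω) (V₃ ω) ≤ x₁ ∧ max (V₂ ω) (V₃ ω) = x₂}
        = {ω | V₁ ω ≤ x₁} ∩ {ω | max (V₂ ω) (V₃ ω) = x₂} := by
    intro x₁ x₂ hle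
    ext ω
    simp only [Set.mem_setOf_eq, Set.mem_inter_iff, max_le_iff, max_eq_iff]
    omega
  intro x₁ x₂
  refine ⟨?_, ?_, ?_⟩
  · -- case x₁ < x₂
    intro h
    have hE1 : {ω | max (V₁ ω) (V₃ ω) ≤ x₁ ∧ max (V₂ ω) (V₃ ω) = x₂}
        = V₁ ⁻¹' {n | n ≤ x₁} ∩ V₂ ⁻¹' {x₂} ∩ V₃ ⁻¹' {n | n ≤ x₁} := by
      ext ω
      simp only [Set.mem_setOf_eq, Set.mem_inter_iff, Set.mem_preimage,
        Set.mem_singleton_iff, max_le_iff, max_eq_iff]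
      omega
    rw [hE1, key, ENNReal.toReal_mul, ENNReal.toReal_mul, hDen]
    have h1 := hcdf₁ x₁
    have h3 := hcdf₃ x₁
    simp only [Set.preimage_setOf_eq]
    rw [h1, h3, hpmf2, hmul β₁ β₃ x₁]
    ring
  · -- case x₂ < x₁
    intro h
    rw [hE2 x₁ x₂ h.le, hjointpmf, hDen, mul_div_assoc,
      div_self (hpmf_pos (β₂ + β₃) (by linarith) x₂).ne', mul_one]
  · -- case x₁ = x₂
    intro h
    subst h
    have hnum : edwCDF α p (β₁ + β₂ + β₃) x₁ -
        edwCDF α p β₁ x₁ * (1 - p ^ ((x₁ : ℝ) ^ α)) ^ (β₂ + β₃)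
        = edwCDF α p β₁ x₁ * edwPMF α p (β₂ + β₃) x₁ := by
      rw [show β₁ + β₂ + β₃ = β₁ + (β₂ + β₃) by ring, hmul]
      unfold edwPMF edwCDF
      ring
    rw [hE2 x₁ x₁ le_rfl, hjointpmf, hDen, hnum]
end

section
/- Let 0 < p < 1 and α, β₁, β₂, β₃ > 0. Let V₁, V₂, V₃ be independent ℕ-valued random variables with P(Vᵢ ≤ x) = (1 − p^{(x+1)^α})^{βᵢ} for all x ∈ ℕ, and set X₁ = max{V₁, V₃}, X₂ = max{V₂, V₃}. Then the stress–strength probability satisfies P(X₁ < X₂) = Σ_{i=0}^∞ [(1 − p^{(i+2)^α})^{β₂} − (1 − p^{(i+1)^α})^{β₂}] · (1 − p^{(i+1)^α})^{β₁+β₃}. -/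
open MeasureTheory ProbabilityTheory

/-- Result 2: the stress-strength probability `P(X₁ < X₂)` for the BDEW distribution. -/
theorem bdew_stress_strength
    {Ω : Type*} [MeasurableSpace Ω] (μ : Measure Ω) [IsProbabilityMeasure μ]
    (α p β₁ β₂ β₃ : ℝ)
    (hp0 : 0 < p) (hp1 : p < 1) (hα : 0 < α)
    (hβ₁ : 0 < β₁) (hβ₂ : 0 < β₂) (hβ₃ : 0 < β₃)
    (V₁ V₂ V₃ : Ω → ℕ)
    (hm₁ : Measurable V₁) (hm₂ : Measurable V₂) (hm₃ : Measurable V₃)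
    (hindep : iIndepFun ![V₁, V₂, V₃] μ)
    (hcdf₁ : ∀ x : ℕ, (μ {ω | V₁ ω ≤ x}).toReal = edwCDF α p β₁ x)
    (hcdf₂ : ∀ x : ℕ, (μ {ω | V₂ ω ≤ x}).toReal = edwCDF α p β₂ x)
    (hcdf₃ : ∀ x : ℕ, (μ {ω | V₃ ω ≤ x}).toReal = edwCDF α p β₃ x) :
    (μ {ω | max (V₁ ω) (V₃ ω) < max (V₂ ω) (V₃ ω)}).toReal =
      ∑' i : ℕ,
        ((1 - p ^ (((i : ℝ) + 2) ^ α)) ^ β₂ - (1 - p ^ (((i : ℝ) + 1) ^ α)) ^ β₂) *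
          (1 - p ^ (((i : ℝ) + 1) ^ α)) ^ (β₁ + β₃) := by
  set S : ℕ → Set Ω := fun j => V₁ ⁻¹' {k | k < j} ∩ V₂ ⁻¹' {j} ∩ V₃ ⁻¹' {k | k < j}
    with hSdef
  -- rewrite the event
  have hev : {ω | max (V₁ ω) (V₃ ω) < max (V₂ ω) (V₃ ω)} = ⋃ j : ℕ, S j := by
    ext ω
    simp only [hSdef, Set.mem_setOf_eq, Set.mem_iUnion, Set.mem_inter_iff, Set.mem_preimage,
      Set.mem_singleton_iff]
    constructor
    · intro h
      exact ⟨V₂ ω, by omega⟩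
    · rintro ⟨j, h⟩
      omega
  have hSm : ∀ j, MeasurableSet (S j) := by
    intro j
    exact ((hm₁ (MeasurableSet.of_discrete)).inter
      (hm₂ (MeasurableSet.of_discrete))).inter (hm₃ (MeasurableSet.of_discrete))
  have hd : Pairwise (Function.onFun Disjoint S) := by
    intro i j hij
    refine Set.disjoint_left.2 ?_
    rintro ω ⟨⟨-, h2⟩, -⟩ ⟨⟨-, h2'⟩, -⟩
    exact hij ((h2.symm).trans h2')
  -- independence
  have hind : ∀ (j : ℕ) (U : Set ℕ),
      μ (V₁ ⁻¹' U ∩ V₂ ⁻¹' {j} ∩ V₃ ⁻¹' U) =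
        μ (V₁ ⁻¹' U) * μ (V₂ ⁻¹' {j}) * μ (V₃ ⁻¹' U) := by
    intro j U
    have h := hindep.measure_inter_preimage_eq_mul (Finset.univ : Finset (Fin 3))
      (sets := ![U, {j}, U]) (fun i _ => MeasurableSet.of_discrete)
    have hset : (⋂ i ∈ (Finset.univ : Finset (Fin 3)), ![V₁, V₂, V₃] i ⁻¹' ![U, {j}, U] i)
        = V₁ ⁻¹' U ∩ V₂ ⁻¹' {j} ∩ V₃ ⁻¹' U := by
      ext ω
      simp [Set.mem_iInter, Fin.forall_fin_succ, and_assoc]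
    rw [hset, Fin.prod_univ_three] at h
    simpa using h
  rw [hev, measure_iUnion hd hSm, ENNReal.tsum_toReal_eq (fun j => measure_ne_top μ _)]
  -- shift the index
  have hinj : Function.Injective (fun i : ℕ => i + 1) := fun a b h => by simpa using h
  have hsupp : Function.support (fun j => (μ (S j)).toReal) ⊆ Set.range (fun i : ℕ => i + 1) := by
    intro x hx
    rcases x with _ | x
    · exfalso
      apply hx
      have : S 0 = ∅ := by ext ω; simp [hSdef]
      simp [this]
    · exact ⟨x, rfl⟩
  rw [← hinj.tsum_eq hsupp]
  refine tsum_congr fun i => ?_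
  -- compute the term
  have hlt : {k : ℕ | k < i + 1} = {k : ℕ | k ≤ i} := by ext k; simp [Nat.lt_succ_iff]
  have hS : μ (S (i + 1)) =
      μ (V₁ ⁻¹' {k | k ≤ i}) * μ (V₂ ⁻¹' {i + 1}) * μ (V₃ ⁻¹' {k | k ≤ i}) := by
    rw [hSdef]; simp only [hlt]; exact hind (i + 1) _
  -- μ (V₂ = i+1) = F(i+1) - F(i)
  have hsub : V₂ ⁻¹' {k | k ≤ i} ⊆ V₂ ⁻¹' {k | k ≤ i + 1} :=
    fun ω (hω : V₂ ω ≤ i) => hω.trans (Nat.le_succ i)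
  have hV2 : μ (V₂ ⁻¹' {i + 1}) = μ (V₂ ⁻¹' {k | k ≤ i + 1}) - μ (V₂ ⁻¹' {k | k ≤ i}) := by
    have hdiff : V₂ ⁻¹' {i + 1} = V₂ ⁻¹' {k | k ≤ i + 1} \ V₂ ⁻¹' {k | k ≤ i} := by
      ext ω; simp [Set.mem_preimage]; omega
    rw [hdiff, measure_diff hsub
      ((hm₂ MeasurableSet.of_discrete).nullMeasurableSet) (measure_ne_top μ _)]
  have hmono : μ (V₂ ⁻¹' {k | k ≤ i}) ≤ μ (V₂ ⁻¹' {k | k ≤ i + 1}) := measure_mono hsub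
  have hpre : ∀ (V : Ω → ℕ) (n : ℕ), V ⁻¹' {k | k ≤ n} = {ω | V ω ≤ n} := fun V n => rfl
  rw [hS, hV2, ENNReal.toReal_mul, ENNReal.toReal_mul,
    ENNReal.toReal_sub_of_le hmono (measure_ne_top μ _), hpre, hpre, hpre, hpre,
    hcdf₁, hcdf₂, hcdf₂, hcdf₃]
  -- real arithmetic
  have hq : 0 < 1 - p ^ (((i : ℝ) + 1) ^ α) := by
    have : p ^ (((i : ℝ) + 1) ^ α) < 1 :=
      Real.rpow_lt_one hp0.le hp1 (Real.rpow_pos_of_pos (by positivity) α)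
    linarith
  have hadd : (1 - p ^ (((i : ℝ) + 1) ^ α)) ^ (β₁ + β₃)
      = (1 - p ^ (((i : ℝ) + 1) ^ α)) ^ β₁ * (1 - p ^ (((i : ℝ) + 1) ^ α)) ^ β₃ :=
    Real.rpow_add hq β₁ β₃
  simp only [edwCDF]
  push_cast
  rw [hadd]
  ring
end

section
/- Let 0 < p < 1 and α, β₁, β₂, β₃ > 0. Let V₁, V₂, V₃ be independent ℕ-valued random variables with P(Vᵢ ≤ x) = (1 − p^{(x+1)^α})^{βᵢ} for all x ∈ ℕ, and set X₁ = max{V₁, V₃}, X₂ = max{V₂, V₃}. Then X₁ and X₂ are positively quadrant dependent: for all x₁, x₂ ∈ ℕ, P(X₁ ≤ x₁, X₂ ≤ x₂) ≥ P(X₁ ≤ x₁) · P(X₂ ≤ x₂). -/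
open MeasureTheory ProbabilityTheory

/-- Result 3: `X₁` and `X₂` are positively quadrant dependent. -/
theorem bdew_pqd
    {Ω : Type*} [MeasurableSpace Ω] (μ : Measure Ω) [IsProbabilityMeasure μ]
    (α p β₁ β₂ β₃ : ℝ)
    (hp0 : 0 < p) (hp1 : p < 1) (hα : 0 < α)
    (hβ₁ : 0 < β₁) (hβ₂ : 0 < β₂) (hβ₃ : 0 < β₃)
    (V₁ V₂ V₃ : Ω → ℕ)
    (hm₁ : Measurable V₁) (hm₂ : Measurable V₂) (hm₃ : Measurable V₃)
    (hindep : iIndepFun ![V₁, V₂, V₃] μ)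
    (hcdf₁ : ∀ x : ℕ, (μ {ω | V₁ ω ≤ x}).toReal = edwCDF α p β₁ x)
    (hcdf₂ : ∀ x : ℕ, (μ {ω | V₂ ω ≤ x}).toReal = edwCDF α p β₂ x)
    (hcdf₃ : ∀ x : ℕ, (μ {ω | V₃ ω ≤ x}).toReal = edwCDF α p β₃ x) :
    ∀ x₁ x₂ : ℕ,
      (μ {ω | max (V₁ ω) (V₃ ω) ≤ x₁ ∧ max (V₂ ω) (V₃ ω) ≤ x₂}).toReal ≥
        (μ {ω | max (V₁ ω) (V₃ ω) ≤ x₁}).toReal * (μ {ω | max (V₂ ω) (V₃ ω) ≤ x₂}).toReal := by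
  intro x₁ x₂
  set m := min x₁ x₂ with hm
  -- triple independence
  have h13 : IndepFun V₁ V₃ μ := hindep.indepFun (i := 0) (j := 2) (by decide)
  have h23 : IndepFun V₂ V₃ μ := hindep.indepFun (i := 1) (j := 2) (by decide)
  have hsets : ∀ t : ℕ, MeasurableSet (Set.Iic t) := fun t => measurableSet_Iic
  have htriple : μ {ω | V₁ ω ≤ x₁ ∧ V₂ ω ≤ x₂ ∧ V₃ ω ≤ m}
      = μ {ω | V₁ ω ≤ x₁} * μ {ω | V₂ ω ≤ x₂} * μ {ω | V₃ ω ≤ m} := by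
    have := hindep.measure_inter_preimage_eq_mul (Finset.univ)
      (sets := ![Set.Iic x₁, Set.Iic x₂, Set.Iic m])
      (fun i _ => by fin_cases i <;> exact measurableSet_Iic)
    simp only [Fin.prod_univ_three] at this
    have hset : (⋂ i ∈ Finset.univ, (![V₁, V₂, V₃] i) ⁻¹' (![Set.Iic x₁, Set.Iic x₂, Set.Iic m] i))
        = {ω | V₁ ω ≤ x₁ ∧ V₂ ω ≤ x₂ ∧ V₃ ω ≤ m} := by
      ext ω
      simp [Fin.forall_fin_succ, Set.mem_iInter, and_assoc]
    rw [hset] at this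
    simpa [Set.preimage] using this
  have hpair1 : μ {ω | V₁ ω ≤ x₁ ∧ V₃ ω ≤ x₁} = μ {ω | V₁ ω ≤ x₁} * μ {ω | V₃ ω ≤ x₁} := by
    have := h13.measure_inter_preimage_eq_mul (Set.Iic x₁) (Set.Iic x₁)
      measurableSet_Iic measurableSet_Iic
    simpa [Set.preimage, Set.inter_def] using this
  have hpair2 : μ {ω | V₂ ω ≤ x₂ ∧ V₃ ω ≤ x₂} = μ {ω | V₂ ω ≤ x₂} * μ {ω | V₃ ω ≤ x₂} := by
    have := h23.measure_inter_preimage_eq_mul (Set.Iic x₂) (Set.Iic x₂)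
      measurableSet_Iic measurableSet_Iic
    simpa [Set.preimage, Set.inter_def] using this
  have e1 : {ω | max (V₁ ω) (V₃ ω) ≤ x₁ ∧ max (V₂ ω) (V₃ ω) ≤ x₂}
      = {ω | V₁ ω ≤ x₁ ∧ V₂ ω ≤ x₂ ∧ V₃ ω ≤ m} := by
    ext ω; simp [max_le_iff, le_min_iff, hm]; tauto
  have e2 : {ω | max (V₁ ω) (V₃ ω) ≤ x₁} = {ω | V₁ ω ≤ x₁ ∧ V₃ ω ≤ x₁} := by
    ext ω; simp [max_le_iff]
  have e3 : {ω | max (V₂ ω) (V₃ ω) ≤ x₂} = {ω | V₂ ω ≤ x₂ ∧ V₃ ω ≤ x₂} := by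
    ext ω; simp [max_le_iff]
  rw [e1, e2, e3, htriple, hpair1, hpair2]
  rw [ENNReal.toReal_mul, ENNReal.toReal_mul, ENNReal.toReal_mul, ENNReal.toReal_mul]
  set a := (μ {ω | V₁ ω ≤ x₁}).toReal
  set b := (μ {ω | V₂ ω ≤ x₂}).toReal
  set c₁ := (μ {ω | V₃ ω ≤ x₁}).toReal
  set c₂ := (μ {ω | V₃ ω ≤ x₂}).toReal
  set c := (μ {ω | V₃ ω ≤ m}).toReal
  have ha : 0 ≤ a := ENNReal.toReal_nonneg
  have hb : 0 ≤ b := ENNReal.toReal_nonneg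
  have hc1 : c₁ ≤ 1 := by
    simpa [c₁] using ENNReal.toReal_mono (by simp) (prob_le_one (μ := μ) (s := {ω | V₃ ω ≤ x₁}))
  have hc2 : c₂ ≤ 1 := by
    simpa [c₂] using ENNReal.toReal_mono (by simp) (prob_le_one (μ := μ) (s := {ω | V₃ ω ≤ x₂}))
  have hc1n : 0 ≤ c₁ := ENNReal.toReal_nonneg
  have hc2n : 0 ≤ c₂ := ENNReal.toReal_nonneg
  have key : c₁ * c₂ ≤ c := by
    rcases le_total x₁ x₂ with h | h
    · have : c = c₁ := by simp [c, c₁, hm, min_eq_left h]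
      rw [this]
      nlinarith
    · have : c = c₂ := by simp [c, c₂, hm, min_eq_right h]
      rw [this]
      nlinarith
  have hre : a * c₁ * (b * c₂) = a * b * (c₁ * c₂) := by ring
  rw [ge_iff_le, hre]
  exact mul_le_mul_of_nonneg_left key (mul_nonneg ha hb)
end

section
/- Let 0 < p < 1, α > 0, n ≥ 1, and βⱼ₁, βⱼ₂, βⱼ₃ > 0 for j = 1, …, n. Suppose the pairs (X_{j1}, X_{j2}), j = 1, …, n, are independent, and each (X_{j1}, X_{j2}) has the BDEW(α, p, βⱼ₁, βⱼ₂, βⱼ₃) joint distribution, i.e. P(X_{j1} ≤ x₁, X_{j2} ≤ x₂) = (1 − p^{(x₁+1)^α})^{βⱼ₁}(1 − p^{(x₂+1)^α})^{βⱼ₂}(1 − p^{(min{x₁,x₂}+1)^α})^{βⱼ₃} for all x₁, x₂ ∈ ℕ. Then Z₁ = max{X_{11}, …, X_{n1}} and Z₂ = max{X_{12}, …, X_{n2}} satisfy, for all x₁, x₂ ∈ ℕ, P(Z₁ ≤ x₁, Z₂ ≤ x₂) = (1 − p^{(x₁+1)^α})^{Σⱼ βⱼ₁}(1 − p^{(x₂+1)^α})^{Σⱼ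 βⱼ₂}(1 − p^{(min{x₁,x₂}+1)^α})^{Σⱼ βⱼ₃}; that is, (Z₁, Z₂) has the BDEW(α, p, Σⱼ βⱼ₁, Σⱼ βⱼ₂, Σⱼ βⱼ₃) distribution. -/
open MeasureTheory ProbabilityTheory

/-- Result 4: componentwise maxima of independent BDEW pairs are again BDEW,
with parameters the sums of the original ones. -/
theorem bdew_max_closure
    {Ω : Type*} [MeasurableSpace Ω] (μ : Measure Ω) [IsProbabilityMeasure μ]
    (n : ℕ) (hn : 1 ≤ n) (α p : ℝ) (hp0 : 0 < p) (hp1 : p < 1) (hα : 0 < α)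
    (b₁ b₂ b₃ : Fin n → ℝ)
    (hb₁ : ∀ j, 0 < b₁ j) (hb₂ : ∀ j, 0 < b₂ j) (hb₃ : ∀ j, 0 < b₃ j)
    (W : Fin n → Ω → ℕ × ℕ) (hWm : ∀ j, Measurable (W j))
    (hindep : iIndepFun W μ)
    (hjoint : ∀ j, ∀ x₁ x₂ : ℕ,
      (μ {ω | (W j ω).1 ≤ x₁ ∧ (W j ω).2 ≤ x₂}).toReal =
        edwCDF α p (b₁ j) x₁ * edwCDF α p (b₂ j) x₂ * edwCDF α p (b₃ j) (min x₁ x₂)) :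
    ∀ x₁ x₂ : ℕ,
      (μ {ω | (Finset.univ.sup fun j => (W j ω).1) ≤ x₁ ∧
            (Finset.univ.sup fun j => (W j ω).2) ≤ x₂}).toReal =
        edwCDF α p (∑ j, b₁ j) x₁ * edwCDF α p (∑ j, b₂ j) x₂ *
          edwCDF α p (∑ j, b₃ j) (min x₁ x₂) := by
  intro x₁ x₂
  have hbase : ∀ y : ℕ, 0 < 1 - p ^ (((y : ℝ) + 1) ^ α) := by
    intro y
    have h1 : p ^ (((y : ℝ) + 1) ^ α) < 1 := by
      apply Real.rpow_lt_one hp0.le hp1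
      positivity
    linarith
  -- the event as an intersection
  have hset : {ω | (Finset.univ.sup fun j => (W j ω).1) ≤ x₁ ∧
      (Finset.univ.sup fun j => (W j ω).2) ≤ x₂} =
      ⋂ j, (W j) ⁻¹' {q : ℕ × ℕ | q.1 ≤ x₁ ∧ q.2 ≤ x₂} := by
    ext ω
    simp only [Set.mem_setOf_eq, Finset.sup_le_iff, Finset.mem_univ, forall_const,
      Set.mem_iInter, Set.mem_preimage, forall_and]
  have hmeas : MeasurableSet {q : ℕ × ℕ | q.1 ≤ x₁ ∧ q.2 ≤ x₂} := by
    exact MeasurableSet.of_discrete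
  have hprod : μ {ω | (Finset.univ.sup fun j => (W j ω).1) ≤ x₁ ∧
      (Finset.univ.sup fun j => (W j ω).2) ≤ x₂} =
      ∏ j, μ ((W j) ⁻¹' {q : ℕ × ℕ | q.1 ≤ x₁ ∧ q.2 ≤ x₂}) := by
    rw [hset]
    exact hindep.meas_iInter fun j => ⟨_, hmeas, rfl⟩
  rw [hprod, ENNReal.toReal_prod]
  have hj : ∀ j, (μ ((W j) ⁻¹' {q : ℕ × ℕ | q.1 ≤ x₁ ∧ q.2 ≤ x₂})).toReal =
      edwCDF α p (b₁ j) x₁ * edwCDF α p (b₂ j) x₂ * edwCDF α p (b₃ j) (min x₁ x₂) := by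
    intro j
    have := hjoint j x₁ x₂
    convert this using 3 <;> rfl
  simp only [hj]
  rw [Finset.prod_mul_distrib, Finset.prod_mul_distrib]
  unfold edwCDF
  rw [← Real.rpow_sum_of_pos (hbase x₁), ← Real.rpow_sum_of_pos (hbase x₂),
    ← Real.rpow_sum_of_pos (hbase (min x₁ x₂))]
end

section
/- Let 0 < p < 1 and α, β₁, β₂, β₃ > 0. Let V₁, V₂, V₃ be independent ℕ-valued random variables with P(Vᵢ ≤ x) = (1 − p^{(x+1)^α})^{βᵢ} for all x ∈ ℕ, and set X₁ = max{V₁, V₃}, X₂ = max{V₂, V₃}. Then the joint reliability (survival) function S(x₁, x₂) = P(X₁ > x₁, X₂ > x₂) satisfies: (i) if x₁ < x₂, S(x₁, x₂) = 1 − (1 − p^{(x₂+1)^α})^{β₂+β₃} − (1 − p^{(x₁+1)^α})^{β₁+β₃} · (1 − (1 − p^{(x₂+1)^α})^{β₂}); (ii) if x₂ < x₁, S(x₁, x₂) = 1 − (1 − p^{(x₁+1)^α})^{β₁+β₃} − (1 − p^{(x₂+1)^α})^{β₂+β₃} · (1 − (1 − p^{(x₁+1)^α})^{β₁}); (iii)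 if x₁ = x₂ = x, S(x, x) = 1 − (1 − p^{(x+1)^α})^{β₃} · [(1 − p^{(x+1)^α})^{β₁} + (1 − p^{(x+1)^α})^{β₂} − (1 − p^{(x+1)^α})^{β₁+β₂}]. -/
open MeasureTheory ProbabilityTheory

lemma bdew_meas_inter3 {Ω : Type*} [MeasurableSpace Ω] (μ : Measure Ω)
    (V₁ V₂ V₃ : Ω → ℕ) (hindep : iIndepFun ![V₁, V₂, V₃] μ)
    (a b c : ℕ) :
    μ {ω | V₁ ω ≤ a ∧ V₂ ω ≤ b ∧ V₃ ω ≤ c}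
      = μ {ω | V₁ ω ≤ a} * μ {ω | V₂ ω ≤ b} * μ {ω | V₃ ω ≤ c} := by
  have h := hindep.meas_iInter (s := ![{ω | V₁ ω ≤ a}, {ω | V₂ ω ≤ b}, {ω | V₃ ω ≤ c}]) ?_
  · rw [show {ω | V₁ ω ≤ a ∧ V₂ ω ≤ b ∧ V₃ ω ≤ c} =
      ⋂ i, ![{ω | V₁ ω ≤ a}, {ω | V₂ ω ≤ b}, {ω | V₃ ω ≤ c}] i from by
        ext ω; simp [Set.mem_iInter, Fin.forall_fin_succ]]
    rw [h, Fin.prod_univ_three]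
    simp
  · intro i
    fin_cases i <;> exact ⟨Set.Iic _, measurableSet_Iic, rfl⟩

lemma bdew_meas_inter2 {Ω : Type*} [MeasurableSpace Ω] (μ : Measure Ω)
    (V W : Ω → ℕ) (h : IndepFun V W μ) (a c : ℕ) :
    μ {ω | V ω ≤ a ∧ W ω ≤ c} = μ {ω | V ω ≤ a} * μ {ω | W ω ≤ c} := by
  have := h.measure_inter_preimage_eq_mul (Set.Iic a) (Set.Iic c)
    measurableSet_Iic measurableSet_Iic
  exact this

/-- The joint reliability (survival) function of the BDEW distribution. -/
theorem bdew_joint_reliability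
    {Ω : Type*} [MeasurableSpace Ω] (μ : Measure Ω) [IsProbabilityMeasure μ]
    (α p β₁ β₂ β₃ : ℝ)
    (hp0 : 0 < p) (hp1 : p < 1) (hα : 0 < α)
    (hβ₁ : 0 < β₁) (hβ₂ : 0 < β₂) (hβ₃ : 0 < β₃)
    (V₁ V₂ V₃ : Ω → ℕ)
    (hm₁ : Measurable V₁) (hm₂ : Measurable V₂) (hm₃ : Measurable V₃)
    (hindep : iIndepFun ![V₁, V₂, V₃] μ)
    (hcdf₁ : ∀ x : ℕ, (μ {ω | V₁ ω ≤ x}).toReal = edwCDF α p β₁ x)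
    (hcdf₂ : ∀ x : ℕ, (μ {ω | V₂ ω ≤ x}).toReal = edwCDF α p β₂ x)
    (hcdf₃ : ∀ x : ℕ, (μ {ω | V₃ ω ≤ x}).toReal = edwCDF α p β₃ x) :
    ∀ x₁ x₂ : ℕ,
      (x₁ < x₂ →
        (μ {ω | x₁ < max (V₁ ω) (V₃ ω) ∧ x₂ < max (V₂ ω) (V₃ ω)}).toReal =
          1 - (1 - p ^ (((x₂ : ℝ) + 1) ^ α)) ^ (β₂ + β₃) -
            (1 - p ^ (((x₁ : ℝ) + 1) ^ α)) ^ (β₁ + β₃) *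
              (1 - (1 - p ^ (((x₂ : ℝ) + 1) ^ α)) ^ β₂)) ∧
      (x₂ < x₁ →
        (μ {ω | x₁ < max (V₁ ω) (V₃ ω) ∧ x₂ < max (V₂ ω) (V₃ ω)}).toReal =
          1 - (1 - p ^ (((x₁ : ℝ) + 1) ^ α)) ^ (β₁ + β₃) -
            (1 - p ^ (((x₂ : ℝ) + 1) ^ α)) ^ (β₂ + β₃) *
              (1 - (1 - p ^ (((x₁ : ℝ) + 1) ^ α)) ^ β₁)) ∧
      (x₁ = x₂ →
        (μ {ω | x₁ < max (V₁ ω) (V₃ ω) ∧ x₂ < max (V₂ ω) (V₃ ω)}).toReal =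
          1 - (1 - p ^ (((x₁ : ℝ) + 1) ^ α)) ^ β₃ *
            ((1 - p ^ (((x₁ : ℝ) + 1) ^ α)) ^ β₁ + (1 - p ^ (((x₁ : ℝ) + 1) ^ α)) ^ β₂ -
              (1 - p ^ (((x₁ : ℝ) + 1) ^ α)) ^ (β₁ + β₂))) := by
  -- independence of pairs
  have h13 : IndepFun V₁ V₃ μ := by
    have := hindep.indepFun (i := 0) (j := 2) (by decide)
    simpa using this
  have h23 : IndepFun V₂ V₃ μ := by
    have := hindep.indepFun (i := 1) (j := 2) (by decide)
    simpa using this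
  intro x₁ x₂
  -- positivity facts
  have hbase : ∀ x : ℕ, 0 < 1 - p ^ (((x : ℝ) + 1) ^ α) := by
    intro x
    have ht : (0:ℝ) < ((x : ℝ) + 1) ^ α := Real.rpow_pos_of_pos (by positivity) α
    have : p ^ (((x : ℝ) + 1) ^ α) < 1 := Real.rpow_lt_one hp0.le hp1 ht
    linarith
  -- the fundamental computation of the survival function
  have key : ∀ y₁ y₂ : ℕ,
      (μ {ω | y₁ < max (V₁ ω) (V₃ ω) ∧ y₂ < max (V₂ ω) (V₃ ω)}).toReal =
        1 - edwCDF α p β₁ y₁ * edwCDF α p β₃ y₁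
          - edwCDF α p β₂ y₂ * edwCDF α p β₃ y₂
          + edwCDF α p β₁ y₁ * edwCDF α p β₂ y₂ * edwCDF α p β₃ (min y₁ y₂) := by
    intro y₁ y₂
    set S : Set Ω := V₁ ⁻¹' Set.Iic y₁ ∩ V₃ ⁻¹' Set.Iic y₁ with hS
    set T : Set Ω := V₂ ⁻¹' Set.Iic y₂ ∩ V₃ ⁻¹' Set.Iic y₂ with hT
    have hSm : MeasurableSet S := (hm₁ measurableSet_Iic).inter (hm₃ measurableSet_Iic)
    have hTm : MeasurableSet T := (hm₂ measurableSet_Iic).inter (hm₃ measurableSet_Iic)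
    have hE : {ω | y₁ < max (V₁ ω) (V₃ ω) ∧ y₂ < max (V₂ ω) (V₃ ω)} = (S ∪ T)ᶜ := by
      ext ω
      simp only [hS, hT, Set.mem_setOf_eq, Set.mem_compl_iff, Set.mem_union, Set.mem_inter_iff,
        Set.mem_preimage, Set.mem_Iic, not_or, not_and_or, not_le, lt_max_iff]
    have hST : S ∩ T = {ω | V₁ ω ≤ y₁ ∧ V₂ ω ≤ y₂ ∧ V₃ ω ≤ min y₁ y₂} := by
      ext ω
      simp only [hS, hT, Set.mem_inter_iff, Set.mem_preimage, Set.mem_Iic, Set.mem_setOf_eq,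
        le_min_iff]
      tauto
    have hSv : (μ S).toReal = edwCDF α p β₁ y₁ * edwCDF α p β₃ y₁ := by
      have : μ S = μ {ω | V₁ ω ≤ y₁} * μ {ω | V₃ ω ≤ y₁} :=
        bdew_meas_inter2 μ V₁ V₃ h13 y₁ y₁
      rw [this, ENNReal.toReal_mul, hcdf₁, hcdf₃]
    have hTv : (μ T).toReal = edwCDF α p β₂ y₂ * edwCDF α p β₃ y₂ := by
      have : μ T = μ {ω | V₂ ω ≤ y₂} * μ {ω | V₃ ω ≤ y₂} :=
        bdew_meas_inter2 μ V₂ V₃ h23 y₂ y₂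
      rw [this, ENNReal.toReal_mul, hcdf₂, hcdf₃]
    have hSTv : (μ (S ∩ T)).toReal
        = edwCDF α p β₁ y₁ * edwCDF α p β₂ y₂ * edwCDF α p β₃ (min y₁ y₂) := by
      rw [hST, bdew_meas_inter3 μ V₁ V₂ V₃ hindep, ENNReal.toReal_mul, ENNReal.toReal_mul,
        hcdf₁, hcdf₂, hcdf₃]
    have hunion : (μ (S ∪ T)).toReal = (μ S).toReal + (μ T).toReal - (μ (S ∩ T)).toReal := by
      have h := measure_union_add_inter (μ := μ) S hTm
      have := congrArg ENNReal.toReal h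
      rw [ENNReal.toReal_add (measure_ne_top μ _) (measure_ne_top μ _),
        ENNReal.toReal_add (measure_ne_top μ _) (measure_ne_top μ _)] at this
      linarith
    have hcompl : (μ ((S ∪ T)ᶜ)).toReal = 1 - (μ (S ∪ T)).toReal := by
      rw [measure_compl (hSm.union hTm) (measure_ne_top μ _), measure_univ]
      rw [ENNReal.toReal_sub_of_le prob_le_one (by simp)]
      simp
    rw [hE, hcompl, hunion, hSv, hTv, hSTv]
    ring
  -- abbreviations for the algebra
  set a : ℝ := 1 - p ^ (((x₁ : ℝ) + 1) ^ α) with ha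
  set b : ℝ := 1 - p ^ (((x₂ : ℝ) + 1) ^ α) with hb
  have ha0 : 0 < a := hbase x₁
  have hb0 : 0 < b := hbase x₂
  refine ⟨fun h12 => ?_, fun h21 => ?_, fun heq => ?_⟩
  · rw [key x₁ x₂, min_eq_left h12.le]
    simp only [edwCDF, ← ha, ← hb]
    rw [Real.rpow_add ha0, Real.rpow_add hb0]
    ring
  · rw [key x₁ x₂, min_eq_right h21.le]
    simp only [edwCDF, ← ha, ← hb]
    rw [Real.rpow_add ha0, Real.rpow_add hb0]
    ring
  · subst heq
    rw [key x₁ x₁, min_self]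
    simp only [edwCDF, ← ha]
    rw [Real.rpow_add ha0]
    ring
end
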